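/- arXiv:math/0403157 — 7 statements merged into one kernel-verified Lean document; each statement's English description precedes it below -/
import Mathlib

section
/- Let p be an odd prime and α a non-square in 𝔽_p. In Ā_p = ℍ[𝔽_p, α, 0], let x = c·j + d·k with (c,d) ≠ (0,0). Then the conjugation orbit of x under the invertible elements of the form a + b·i, i.e. the set { y ∈ Ā_p | ∃ a b, a² − αb² ≠ 0 and y·(a + b·i) = (a + b·i)·x }, has exactly p + 1 elements. -/
open Quaternion

noncomputable def conjElt {p : ℕ} [Fact p.Prime] (α c d a b : ZMod p) : ℍ[ZMod p, α, 0] :=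
  ⟨0, 0, (c * (a ^ 2 + α * b ^ 2) + 2 * α * a * b * d) / (a ^ 2 - α * b ^ 2),
    (d * (a ^ 2 + α * b ^ 2) + 2 * a * b * c) / (a ^ 2 - α * b ^ 2)⟩

section
variable {p : ℕ} [Fact p.Prime] {α : ZMod p}


lemma aux_nondeg (hα : ¬ IsSquare α) {a b : ZMod p} (h : a ^ 2 - α * b ^ 2 = 0) :
    a = 0 ∧ b = 0 := by
  have hb : b = 0 := by
    by_contra hb
    exact hα ⟨a / b, by field_simp; linear_combination -h⟩
  subst hb
  refine ⟨?_, rfl⟩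
  have : a ^ 2 = 0 := by linear_combination h
  exact pow_eq_zero_iff two_ne_zero |>.mp this

lemma conjElt_spec {a b c d : ZMod p} (hab : a ^ 2 - α * b ^ 2 ≠ 0) :
    conjElt α c d a b * ⟨a, b, 0, 0⟩ = (⟨a, b, 0, 0⟩ : ℍ[ZMod p, α, 0]) * ⟨0, 0, c, d⟩ := by
  ext <;> simp [conjElt] <;> field_simp <;> ring

lemma aux_cancel {a b : ZMod p} (hab : a ^ 2 - α * b ^ 2 ≠ 0)
    {z z' : ℍ[ZMod p, α, 0]} (h : z * ⟨a, b, 0, 0⟩ = z' * ⟨a, b, 0, 0⟩) : z = z' := by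
  have h1 := congrArg QuaternionAlgebra.re h
  have h2 := congrArg QuaternionAlgebra.imI h
  have h3 := congrArg QuaternionAlgebra.imJ h
  have h4 := congrArg QuaternionAlgebra.imK h
  simp only [QuaternionAlgebra.re_mul, QuaternionAlgebra.imI_mul,
    QuaternionAlgebra.imJ_mul, QuaternionAlgebra.imK_mul] at h1 h2 h3 h4
  ext
  · have : (z.re - z'.re) * (a ^ 2 - α * b ^ 2) = 0 := by
      linear_combination a * h1 - α * b * h2
    exact sub_eq_zero.mp ((mul_eq_zero.mp this).resolve_right hab)
  · have : (z.imI - z'.imI) * (a ^ 2 - α * b ^ 2) = 0 := by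
      linear_combination a * h2 - b * h1
    exact sub_eq_zero.mp ((mul_eq_zero.mp this).resolve_right hab)
  · have : (z.imJ - z'.imJ) * (a ^ 2 - α * b ^ 2) = 0 := by
      linear_combination a * h3 + α * b * h4
    exact sub_eq_zero.mp ((mul_eq_zero.mp this).resolve_right hab)
  · have : (z.imK - z'.imK) * (a ^ 2 - α * b ^ 2) = 0 := by
      linear_combination a * h4 + b * h3
    exact sub_eq_zero.mp ((mul_eq_zero.mp this).resolve_right hab)

-- forward direction: equal conjugates → proportional
lemma cross_of_eq (hα : ¬ IsSquare α) (hp2 : (2 : ZMod p) ≠ 0) {c d : ZMod p}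
    (hcd : ¬ (c = 0 ∧ d = 0)) {a b a₀ b₀ : ZMod p}
    (hab : a ^ 2 - α * b ^ 2 ≠ 0) (hab₀ : a₀ ^ 2 - α * b₀ ^ 2 ≠ 0)
    (h : conjElt α c d a b = conjElt α c d a₀ b₀) :
    a * b₀ = a₀ * b := by
  have hcomm : (⟨a, b, 0, 0⟩ : ℍ[ZMod p, α, 0]) * ⟨a₀, b₀, 0, 0⟩
      = (⟨a₀, b₀, 0, 0⟩ : ℍ[ZMod p, α, 0]) * ⟨a, b, 0, 0⟩ := by
    ext <;> simp <;> ring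
  have h1 : conjElt α c d a₀ b₀ * ⟨a, b, 0, 0⟩
      = (⟨a, b, 0, 0⟩ : ℍ[ZMod p, α, 0]) * ⟨0, 0, c, d⟩ := h ▸ conjElt_spec hab
  have h2 := conjElt_spec (α := α) (c := c) (d := d) hab₀
  have key : (⟨a, b, 0, 0⟩ : ℍ[ZMod p, α, 0]) * ⟨0, 0, c, d⟩ * ⟨a₀, b₀, 0, 0⟩
      = (⟨a₀, b₀, 0, 0⟩ : ℍ[ZMod p, α, 0]) * ⟨0, 0, c, d⟩ * ⟨a, b, 0, 0⟩ := by
    calc (⟨a, b, 0, 0⟩ : ℍ[ZMod p, α, 0]) * ⟨0, 0, c, d⟩ * ⟨a₀, b₀, 0, 0⟩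
        = conjElt α c d a₀ b₀ * ⟨a, b, 0, 0⟩ * ⟨a₀, b₀, 0, 0⟩ := by rw [h1]
      _ = conjElt α c d a₀ b₀ * (⟨a, b, 0, 0⟩ * ⟨a₀, b₀, 0, 0⟩) := by rw [mul_assoc]
      _ = conjElt α c d a₀ b₀ * (⟨a₀, b₀, 0, 0⟩ * ⟨a, b, 0, 0⟩) := by rw [hcomm]
      _ = conjElt α c d a₀ b₀ * ⟨a₀, b₀, 0, 0⟩ * ⟨a, b, 0, 0⟩ := by rw [mul_assoc]
      _ = (⟨a₀, b₀, 0, 0⟩ : ℍ[ZMod p, α, 0]) * ⟨0, 0, c, d⟩ * ⟨a, b, 0, 0⟩ := by rw [h2]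
  have hJ := congrArg QuaternionAlgebra.imJ key
  have hK := congrArg QuaternionAlgebra.imK key
  simp only [QuaternionAlgebra.imJ_mul, QuaternionAlgebra.imI_mul,
    QuaternionAlgebra.re_mul, QuaternionAlgebra.imK_mul] at hJ hK
  have hα0 : α ≠ 0 := fun h0 => hα ⟨0, by rw [h0]; ring⟩
  have hd : 2 * α * d * (a * b₀ - a₀ * b) = 0 := by linear_combination -hJ
  have hc : 2 * c * (a * b₀ - a₀ * b) = 0 := by linear_combination -hK
  rcases (not_and_or.mp hcd) with hc0 | hd0
  · exact sub_eq_zero.mp ((mul_eq_zero.mp hc).resolve_left (mul_ne_zero hp2 hc0))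
  · exact sub_eq_zero.mp ((mul_eq_zero.mp hd).resolve_left
      (mul_ne_zero (mul_ne_zero hp2 hα0) hd0))

lemma exists_t {a b a₀ b₀ : ZMod p} (h0 : ¬ (a₀ = 0 ∧ b₀ = 0))
    (hcross : a * b₀ = a₀ * b) : ∃ t : ZMod p, a = t * a₀ ∧ b = t * b₀ := by
  rcases not_and_or.mp h0 with ha₀ | hb₀
  · exact ⟨a / a₀, by field_simp, by field_simp; linear_combination -hcross⟩
  · exact ⟨b / b₀, by field_simp; linear_combination hcross, by field_simp⟩

lemma eq_of_smul {a₀ b₀ t : ZMod p} (c d : ZMod p) (ht : t ≠ 0)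
    (hab₀ : a₀ ^ 2 - α * b₀ ^ 2 ≠ 0) :
    conjElt α c d (t * a₀) (t * b₀) = conjElt α c d a₀ b₀ := by
  have hΔt : (t * a₀) ^ 2 - α * (t * b₀) ^ 2 ≠ 0 := by
    have h : (t * a₀) ^ 2 - α * (t * b₀) ^ 2 = t ^ 2 * (a₀ ^ 2 - α * b₀ ^ 2) := by ring
    rw [h]; exact mul_ne_zero (pow_ne_zero 2 ht) hab₀
  ext <;> dsimp only [conjElt] <;>
    first
      | rfl
      | (rw [div_eq_div_iff hΔt hab₀]; ring)

end

/-- In `Ā_p = ℍ[𝔽_p, α, 0]` (α a non-square), the conjugation orbit of a nonzero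
nilradical element `x = c·j + d·k` under the invertible elements `a + b·i`
has exactly `p + 1` elements. -/
theorem orbit_of_nonzero_nilradical_has_card_p_add_one
    (p : ℕ) [Fact p.Prime] (hp : p ≠ 2) (α : ZMod p) (hα : ¬ IsSquare α)
    (c d : ZMod p) (hx : (c, d) ≠ (0, 0)) :
    {y : ℍ[ZMod p, α, 0] | ∃ a b : ZMod p, a ^ 2 - α * b ^ 2 ≠ 0 ∧
      y * ⟨a, b, 0, 0⟩ = (⟨a, b, 0, 0⟩ : ℍ[ZMod p, α, 0]) * ⟨0, 0, c, d⟩}.ncard = p + 1 := by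
  classical
  have hp2 : (2 : ZMod p) ≠ 0 := by
    intro h
    have h2 : ((2 : ℕ) : ZMod p) = 0 := by exact_mod_cast h
    have h3 := (ZMod.natCast_eq_zero_iff 2 p).mp h2
    exact hp ((Nat.prime_dvd_prime_iff_eq (Fact.out : p.Prime) Nat.prime_two).mp h3)
  have hcd : ¬ (c = 0 ∧ d = 0) := by rintro ⟨rfl, rfl⟩; exact hx rfl
  set T : Finset (ZMod p × ZMod p) :=
    Finset.univ.filter (fun v => v.1 ^ 2 - α * v.2 ^ 2 ≠ 0) with hT
  set g : ZMod p × ZMod p → ℍ[ZMod p, α, 0] := fun v => conjElt α c d v.1 v.2 with hg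
  -- Step A : the orbit is the image of T under g
  have hS : {y : ℍ[ZMod p, α, 0] | ∃ a b : ZMod p, a ^ 2 - α * b ^ 2 ≠ 0 ∧
      y * ⟨a, b, 0, 0⟩ = (⟨a, b, 0, 0⟩ : ℍ[ZMod p, α, 0]) * ⟨0, 0, c, d⟩}
      = ↑(T.image g) := by
    ext y
    simp only [Set.mem_setOf_eq, Finset.coe_image, Set.mem_image, Finset.mem_coe,
      Finset.mem_filter, Finset.mem_univ, true_and, hT, hg]
    constructor
    · rintro ⟨a, b, hab, heq⟩
      exact ⟨(a, b), hab, (aux_cancel hab (heq.trans (conjElt_spec hab).symm)).symm⟩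
    · rintro ⟨v, hv, rfl⟩
      exact ⟨v.1, v.2, hv, conjElt_spec hv⟩
  rw [hS, Set.ncard_coe_finset]
  -- cardinalities
  have hcardZ : Fintype.card (ZMod p) = p := ZMod.card p
  have hne0 : (Finset.univ.filter (fun t : ZMod p => t ≠ 0)).card = p - 1 := by
    rw [Finset.filter_ne', Finset.card_erase_of_mem (Finset.mem_univ _),
      Finset.card_univ, hcardZ]
  have hTcard : T.card = p * p - 1 := by
    have : T = Finset.univ.filter (fun v : ZMod p × ZMod p => v ≠ (0, 0)) := by
      apply Finset.filter_congr
      intro v _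
      constructor
      · intro h hv0
        apply h
        rw [hv0]; norm_num
      · intro h hΔ
        obtain ⟨h1, h2⟩ := aux_nondeg hα hΔ
        exact h (Prod.ext h1 h2)
    rw [this, Finset.filter_ne', Finset.card_erase_of_mem (Finset.mem_univ _),
      Finset.card_univ, Fintype.card_prod, hcardZ]
  -- fibers of g over T all have p - 1 elements
  have hfiber : ∀ v₀ ∈ T, (T.filter (fun v => g v = g v₀)).card = p - 1 := by
    intro v₀ hv₀
    rw [hT, Finset.mem_filter] at hv₀
    have hab₀ : v₀.1 ^ 2 - α * v₀.2 ^ 2 ≠ 0 := hv₀.2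
    have h0 : ¬ (v₀.1 = 0 ∧ v₀.2 = 0) := by
      rintro ⟨h1, h2⟩
      apply hab₀; rw [h1, h2]; ring
    have hset : T.filter (fun v => g v = g v₀)
        = (Finset.univ.filter (fun t : ZMod p => t ≠ 0)).image
            (fun t => (t * v₀.1, t * v₀.2)) := by
      ext v
      simp only [Finset.mem_filter, Finset.mem_image, Finset.mem_univ, true_and, hT, hg]
      constructor
      · rintro ⟨hv, hgv⟩
        have hcross := cross_of_eq hα hp2 hcd hv hab₀ hgv
        obtain ⟨t, ht1, ht2⟩ := exists_t h0 hcross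
        refine ⟨t, ?_, ?_⟩
        · rintro rfl
          apply hv
          rw [ht1, ht2]; ring
        · exact Prod.ext ht1.symm ht2.symm
      · rintro ⟨t, ht, rfl⟩
        have hΔ : (t * v₀.1) ^ 2 - α * (t * v₀.2) ^ 2 ≠ 0 := by
          have h : (t * v₀.1) ^ 2 - α * (t * v₀.2) ^ 2
              = t ^ 2 * (v₀.1 ^ 2 - α * v₀.2 ^ 2) := by ring
          rw [h]
          exact mul_ne_zero (pow_ne_zero 2 ht) hab₀
        exact ⟨hΔ, eq_of_smul c d ht hab₀⟩
    rw [hset, Finset.card_image_of_injOn, hne0]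
    intro t _ s _ hts
    rw [Prod.mk.injEq] at hts
    rcases not_and_or.mp h0 with h1 | h2
    · exact mul_right_cancel₀ h1 hts.1
    · exact mul_right_cancel₀ h2 hts.2
  -- put it together
  have hsum := Finset.card_eq_sum_card_image g T
  have hsum2 : T.card = (T.image g).card * (p - 1) := by
    rw [hsum]
    rw [Finset.sum_congr rfl (fun y hy => ?_), Finset.sum_const, smul_eq_mul]
    obtain ⟨v₀, hv₀, rfl⟩ := Finset.mem_image.mp hy
    exact hfiber v₀ hv₀
  rw [hTcard] at hsum2
  have hple : 2 ≤ p := (Fact.out : p.Prime).two_le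
  have hp1 : p * p - 1 = (p + 1) * (p - 1) := by
    cases' p with q
    · omega
    · simp [Nat.succ_sub_one]; ring_nf; omega
  rw [hp1] at hsum2
  have hpos : p - 1 ≠ 0 := by omega
  exact Nat.eq_of_mul_eq_mul_right (Nat.pos_of_ne_zero hpos) hsum2.symm
end

section
/- Let p be an odd prime and α a non-square in 𝔽_p. In Ā_p = ℍ[𝔽_p, α, 0], suppose x₁ = c₁·j + d₁·k and x₂ = c₂·j + d₂·k are conjugate by an invertible element of the form a + b·i, i.e. there exist a, b ∈ 𝔽_p with a² − αb² ≠ 0 and (a + b·i)·x₁ = x₂·(a + b·i). Then c₁² − α d₁² = c₂² − α d₂². -/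
open Quaternion

/-- In `Ā_p = ℍ[𝔽_p, α, 0]` (α a non-square), if `x₁ = c₁·j + d₁·k` and
`x₂ = c₂·j + d₂·k` are conjugate by an invertible element `a + b·i`, then
`c₁² − α d₁² = c₂² − α d₂²`. -/
theorem conjugate_nilradical_elements_have_equal_norm
    (p : ℕ) [Fact p.Prime] (hp : p ≠ 2) (α : ZMod p) (hα : ¬ IsSquare α)
    (c₁ d₁ c₂ d₂ a b : ZMod p) (hu : a ^ 2 - α * b ^ 2 ≠ 0)
    (hconj : (⟨a, b, 0, 0⟩ : ℍ[ZMod p, α, 0]) * ⟨0, 0, c₁, d₁⟩ =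
      (⟨0, 0, c₂, d₂⟩ : ℍ[ZMod p, α, 0]) * ⟨a, b, 0, 0⟩) :
    c₁ ^ 2 - α * d₁ ^ 2 = c₂ ^ 2 - α * d₂ ^ 2 := by
  have h3 := congrArg QuaternionAlgebra.imJ hconj
  have h4 := congrArg QuaternionAlgebra.imK hconj
  simp only [QuaternionAlgebra.mk_mul_mk] at h3 h4
  have key : (a ^ 2 - α * b ^ 2) * (c₁ ^ 2 - α * d₁ ^ 2) =
      (a ^ 2 - α * b ^ 2) * (c₂ ^ 2 - α * d₂ ^ 2) := by
    linear_combination (a * (c₁ + c₂) + α * b * (d₁ - d₂)) * h3 -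
      α * (b * (c₁ - c₂) + a * (d₁ + d₂)) * h4
  exact mul_left_cancel₀ hu key
end

section
/- Let p be an odd prime and α a non-square in 𝔽_p. In Ā_p = ℍ[𝔽_p, α, 0], for any c₁, d₁, c₂, d₂ ∈ 𝔽_p, the elements x₁ = c₁·j + d₁·k and x₂ = c₂·j + d₂·k are conjugate by an invertible element of the form a + b·i (i.e. there exist a, b with a² − αb² ≠ 0 and (a + b·i)·x₁ = x₂·(a + b·i)) if and only if c₁² − α d₁² = c₂² − α d₂². -/
open Quaternion

lemma zmod_sq_sub_sq_eq_zero {p : ℕ} [Fact p.Prime] {α : ZMod p} (hα : ¬ IsSquare α)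
    {c d : ZMod p} (h : c ^ 2 - α * d ^ 2 = 0) : c = 0 ∧ d = 0 := by
  by_cases hd : d = 0
  · subst hd
    have hc : c ^ 2 = 0 := by linear_combination h
    exact ⟨pow_eq_zero_iff (by norm_num) |>.mp hc, rfl⟩
  · exfalso
    apply hα
    refine ⟨c / d, ?_⟩
    have : α = (c / d) ^ 2 := by
      field_simp
      linear_combination -h
    rw [this]; ring

/-- In `Ā_p = ℍ[𝔽_p, α, 0]` (α a non-square), `x₁ = c₁·j + d₁·k` and
`x₂ = c₂·j + d₂·k` are conjugate by an invertible element `a + b·i` if and only if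
`c₁² − α d₁² = c₂² − α d₂²`. -/
theorem conjugate_nilradical_iff_equal_norm
    (p : ℕ) [Fact p.Prime] (hp : p ≠ 2) (α : ZMod p) (hα : ¬ IsSquare α)
    (c₁ d₁ c₂ d₂ : ZMod p) :
    (∃ a b : ZMod p, a ^ 2 - α * b ^ 2 ≠ 0 ∧
      (⟨a, b, 0, 0⟩ : ℍ[ZMod p, α, 0]) * ⟨0, 0, c₁, d₁⟩ =
        (⟨0, 0, c₂, d₂⟩ : ℍ[ZMod p, α, 0]) * ⟨a, b, 0, 0⟩) ↔
    c₁ ^ 2 - α * d₁ ^ 2 = c₂ ^ 2 - α * d₂ ^ 2 := by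
  have h2 : (2 : ZMod p) ≠ 0 := by
    have : ((2 : ℕ) : ZMod p) ≠ 0 := by
      rw [Ne, ZMod.natCast_eq_zero_iff]
      exact fun h => hp ((Nat.prime_dvd_prime_iff_eq Fact.out Nat.prime_two).mp h)
    simpa using this
  constructor
  · rintro ⟨a, b, hab, heq⟩
    rw [QuaternionAlgebra.ext_iff] at heq
    obtain ⟨-, -, h3, h4⟩ := heq
    simp only [QuaternionAlgebra.imJ_mul, QuaternionAlgebra.imK_mul] at h3 h4
    have key : (a ^ 2 - α * b ^ 2) * (c₁ ^ 2 - α * d₁ ^ 2 - (c₂ ^ 2 - α * d₂ ^ 2)) = 0 := by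
      linear_combination (a * c₁ + α * b * d₁ + (c₂ * a - α * d₂ * b)) * h3 -
        α * (a * d₁ + b * c₁ + (d₂ * a - c₂ * b)) * h4
    have := (mul_eq_zero.mp key).resolve_left hab
    linear_combination this
  · intro h
    by_cases hN : c₁ ^ 2 - α * d₁ ^ 2 = 0
    · obtain ⟨e1, e2⟩ := zmod_sq_sub_sq_eq_zero hα hN
      obtain ⟨e3, e4⟩ := zmod_sq_sub_sq_eq_zero hα (h ▸ hN)
      refine ⟨1, 0, by simp, ?_⟩
      ext <;> simp [e1, e2, e3, e4]
    · by_cases hA0 : c₁ ^ 2 - α * d₁ ^ 2 + c₁ * c₂ - α * d₁ * d₂ = 0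
      · -- degenerate case: c₂ = -c₁, d₂ = -d₁
        have hsum : (c₁ + c₂) ^ 2 - α * (d₁ + d₂) ^ 2 = 0 := by
          linear_combination -h + 2 * hA0
        obtain ⟨e1, e2⟩ := zmod_sq_sub_sq_eq_zero hα hsum
        have hαne : α ≠ 0 := fun h0 => hα (h0 ▸ ⟨0, by ring⟩)
        refine ⟨0, 1, by simpa using neg_ne_zero.mpr hαne, ?_⟩
        rw [QuaternionAlgebra.ext_iff]
        refine ⟨?_, ?_, ?_, ?_⟩ <;>
          simp only [QuaternionAlgebra.re_mul, QuaternionAlgebra.imI_mul,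
            QuaternionAlgebra.imJ_mul, QuaternionAlgebra.imK_mul]
        · ring
        · ring
        · linear_combination α * e2
        · linear_combination e1
      · refine ⟨c₁ ^ 2 - α * d₁ ^ 2 + c₁ * c₂ - α * d₁ * d₂, c₁ * d₂ - c₂ * d₁, ?_, ?_⟩
        · have : (c₁ ^ 2 - α * d₁ ^ 2 + c₁ * c₂ - α * d₁ * d₂) ^ 2 -
              α * (c₁ * d₂ - c₂ * d₁) ^ 2 =
              2 * (c₁ ^ 2 - α * d₁ ^ 2) *
                (c₁ ^ 2 - α * d₁ ^ 2 + c₁ * c₂ - α * d₁ * d₂) := by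
            linear_combination (-(c₁ ^ 2) + α * d₁ ^ 2) * h
          rw [this]
          exact mul_ne_zero (mul_ne_zero h2 hN) hA0
        · rw [QuaternionAlgebra.ext_iff]
          refine ⟨?_, ?_, ?_, ?_⟩ <;>
            simp only [QuaternionAlgebra.re_mul, QuaternionAlgebra.imI_mul,
              QuaternionAlgebra.imJ_mul, QuaternionAlgebra.imK_mul]
          · ring
          · ring
          · linear_combination c₁ * h
          · linear_combination d₁ * h
end

section
/- Let p be an odd prime and α a non-square in 𝔽_p = ZMod p. Then for every nonzero k ∈ 𝔽_p, the number of pairs (c, d) ∈ 𝔽_p × 𝔽_p with c² − α·d² = k is exactly p + 1. -/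
open Finset

/-- For `p` an odd prime, `α` a non-square in `𝔽_p`, and `k ≠ 0`, the equation
`c² − α·d² = k` has exactly `p + 1` solutions `(c, d)`. -/
theorem card_solutions_sub_sq_eq (p : ℕ) [Fact p.Prime] (hp : p ≠ 2) (α : ZMod p)
    (hα : ¬ IsSquare α) (k : ZMod p) (hk : k ≠ 0) :
    (Finset.univ.filter fun cd : ZMod p × ZMod p =>
      cd.1 ^ 2 - α * cd.2 ^ 2 = k).card = p + 1 := by
  have hF : ringChar (ZMod p) ≠ 2 := by
    rw [ZMod.ringChar_zmod_n]; exact hp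
  set χ := quadraticChar (ZMod p) with hχdef
  have hα0 : α ≠ 0 := fun h => hα (h ▸ ⟨0, by simp⟩)
  have hχα : χ α = -1 := quadraticChar_neg_one_iff_not_isSquare.mpr hα
  -- the number of square roots of `t` is `χ t + 1`
  have hcount : ∀ t : ZMod p,
      (((univ.filter fun c : ZMod p => c ^ 2 = t)).card : ℤ) = χ t + 1 := by
    intro t
    have h := quadraticChar_card_sqrts hF t
    rw [← h]
    congr 1
    simp [Set.toFinset_setOf]
  -- the key character sum
  have hsum : ∑ d : ZMod p, χ (k + α * d ^ 2) = 1 := by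
    have step : ∑ d : ZMod p, χ (k + α * d ^ 2)
        = ∑ t : ZMod p,
            (((univ.filter fun d : ZMod p => d ^ 2 = t)).card : ℤ) * χ (k + α * t) := by
      rw [← Finset.sum_fiberwise' univ (fun d : ZMod p => d ^ 2)
        (fun t => χ (k + α * t))]
      refine Finset.sum_congr rfl fun t _ => ?_
      rw [Finset.sum_const, nsmul_eq_mul]
    have h2 : ∑ t : ZMod p, χ (k + α * t) = 0 := by
      rw [← quadraticChar_sum_zero hF]
      exact Fintype.sum_bijective (fun t : ZMod p => k + α * t)
        (((Equiv.mulLeft₀ α hα0).trans (Equiv.addLeft k)).bijective) _ _ (fun t => rfl)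
    have h3 : ∑ t : ZMod p, χ t * χ (k + α * t) = 1 := by
      have e0 : ∑ t : ZMod p, χ t * χ (k + α * t)
          = ∑ t ∈ univ.erase (0 : ZMod p), χ t * χ (k + α * t) := by
        rw [eq_comm]
        apply Finset.sum_erase
        simp [hχdef]
      have e1 : ∑ t ∈ univ.erase (0 : ZMod p), χ t * χ (k + α * t)
          = ∑ t ∈ univ.erase (0 : ZMod p), χ (α + k * t⁻¹) := by
        refine Finset.sum_congr rfl fun t ht => ?_
        have ht0 : t ≠ 0 := Finset.ne_of_mem_erase ht
        have hTinv : χ t⁻¹ = χ t := by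
          have h1 : χ t⁻¹ * χ t = 1 := by
            rw [← map_mul, inv_mul_cancel₀ ht0, map_one]
          have h2 : χ t * χ t = 1 := by
            have := quadraticChar_sq_one (F := ZMod p) ht0
            rwa [sq] at this
          calc χ t⁻¹ = χ t⁻¹ * (χ t * χ t) := by rw [h2, mul_one]
            _ = (χ t⁻¹ * χ t) * χ t := by ring
            _ = χ t := by rw [h1, one_mul]
        have harg : α + k * t⁻¹ = t⁻¹ * (k + α * t) := by
          field_simp
          ring
        rw [harg, map_mul, hTinv]
      have e2 : ∑ t ∈ univ.erase (0 : ZMod p), χ (α + k * t⁻¹)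
          = ∑ u ∈ univ.erase (0 : ZMod p), χ (α + u) := by
        refine Finset.sum_nbij' (fun t => k * t⁻¹) (fun u => k * u⁻¹) ?_ ?_ ?_ ?_ ?_
        · intro a ha
          have ha0 : a ≠ 0 := Finset.ne_of_mem_erase ha
          simp [Finset.mem_erase, hk, inv_ne_zero ha0, mul_ne_zero]
        · intro a ha
          have ha0 : a ≠ 0 := Finset.ne_of_mem_erase ha
          simp [Finset.mem_erase, hk, inv_ne_zero ha0, mul_ne_zero]
        · intro a ha
          have ha0 : a ≠ 0 := Finset.ne_of_mem_erase ha
          field_simp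
        · intro a ha
          have ha0 : a ≠ 0 := Finset.ne_of_mem_erase ha
          field_simp
        · intro a _; rfl
      have e3 : ∑ u ∈ univ.erase (0 : ZMod p), χ (α + u)
          = (∑ u : ZMod p, χ (α + u)) - χ (α + 0) := by
        rw [Finset.sum_erase_eq_sub (Finset.mem_univ 0)]
      have e4 : ∑ u : ZMod p, χ (α + u) = 0 := by
        rw [← quadraticChar_sum_zero hF]
        exact Fintype.sum_bijective (fun u : ZMod p => α + u)
          ((Equiv.addLeft α).bijective) _ _ (fun t => rfl)
      rw [e0, e1, e2, e3, e4, add_zero, hχα]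
      ring
    rw [step]
    have : ∀ t : ZMod p,
        (((univ.filter fun d : ZMod p => d ^ 2 = t)).card : ℤ) * χ (k + α * t)
          = χ t * χ (k + α * t) + χ (k + α * t) := by
      intro t; rw [hcount t]; ring
    rw [Finset.sum_congr rfl fun t _ => this t, Finset.sum_add_distrib, h2, h3]
    norm_num
  -- assemble: count fibers over `d`
  have hmain : ((univ.filter fun cd : ZMod p × ZMod p =>
      cd.1 ^ 2 - α * cd.2 ^ 2 = k).card : ℤ)
      = ∑ d : ZMod p, (((univ.filter fun c : ZMod p => c ^ 2 = k + α * d ^ 2)).card : ℤ) := by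
    have hmainN : (univ.filter fun cd : ZMod p × ZMod p =>
        cd.1 ^ 2 - α * cd.2 ^ 2 = k).card
        = ∑ d : ZMod p, ((univ.filter fun c : ZMod p => c ^ 2 = k + α * d ^ 2)).card := by
      rw [Finset.card_filter, Fintype.sum_prod_type_right]
      refine Finset.sum_congr rfl fun d _ => ?_
      rw [Finset.card_filter]
      refine Finset.sum_congr rfl fun c _ => ?_
      congr 1
      simp [sub_eq_iff_eq_add, eq_sub_iff_add_eq, eq_comm]
    rw [hmainN]
    push_cast
    rfl
  have hfinal : ((univ.filter fun cd : ZMod p × ZMod p =>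
      cd.1 ^ 2 - α * cd.2 ^ 2 = k).card : ℤ) = p + 1 := by
    rw [hmain]
    have : ∀ d : ZMod p,
        (((univ.filter fun c : ZMod p => c ^ 2 = k + α * d ^ 2)).card : ℤ)
          = χ (k + α * d ^ 2) + 1 := fun d => hcount _
    rw [Finset.sum_congr rfl fun d _ => this d, Finset.sum_add_distrib, hsum]
    simp [ZMod.card]
    ring
  exact_mod_cast hfinal
end

section
/- Let r ∈ K satisfy r⁵ + 25r − 25 = 0, and let x, y ∈ K satisfy f⁺(x, y) = 0 and ‖y‖⁴ = 5⁻³ (i.e. the 5-adic valuation of y is 3/4). Then ‖x − r‖² = 5⁻¹ (i.e. x − r has 5-adic valuation 1/2). -/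
/-- The defining polynomial of the plane model of `X₀(125)⁺`. -/
def fplus {K : Type*} [Field K] (x y : K) : K :=
  y ^ 4 - x ^ 5 + 5 * x * y ^ 3 + 15 * x ^ 2 * y ^ 2 + 25 * x ^ 3 * y + 25 * x ^ 4 +
    5 * y ^ 3 + 5 * x * y ^ 2 - 25 * x ^ 3 + 15 * y ^ 2 + 25 * x ^ 2 + 25 * y - 25 * x + 25

private lemma na_max_lt {K : Type*} [Field K] {v : AbsoluteValue K ℝ}
    (hna : IsNonarchimedean v) {a b : K} {M : ℝ} (ha : v a < M) (hb : v b < M) :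
    v (a + b) < M :=
  lt_of_le_of_lt (hna a b) (max_lt ha hb)

private lemma na_add_eq {K : Type*} [Field K] {v : AbsoluteValue K ℝ}
    (hna : IsNonarchimedean v) {a b : K} (h : v b < v a) : v (a + b) = v a := by
  refine le_antisymm ((hna a b).trans (max_le le_rfl h.le)) ?_
  have h2 : v a ≤ max (v (a + b)) (v b) := by
    have h3 := hna (a + b) (-b)
    simpa using h3
  rcases max_cases (v (a + b)) (v b) with ⟨he, _⟩ | ⟨he, _⟩
  · rw [he] at h2; exact h2
  · rw [he] at h2; exact absurd (lt_of_le_of_lt h2 h) (lt_irrefl _)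

private lemma dominate {K : Type*} [Field K] {v : AbsoluteValue K ℝ}
    (hna : IsNonarchimedean v) {A B T : K} (hT : A + B = T) (hB : v B < v A) :
    v T = v A := by
  rw [← hT]; exact na_add_eq hna hB

private lemma key_bound {c a : ℝ} (hc0 : 0 < c) (hc1 : c < 1) (h0a : 0 ≤ a)
    {e : ℕ} (ha : a < c ^ e) (j k m : ℕ) (hj : j ≠ 0) (hm : m ≤ e * j + k) :
    a ^ j * c ^ k < c ^ m := by
  have h1 : a ^ j < (c ^ e) ^ j := pow_lt_pow_left₀ ha h0a hj
  calc a ^ j * c ^ k < (c ^ e) ^ j * c ^ k :=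
        mul_lt_mul_of_pos_right h1 (pow_pos hc0 k)
    _ = c ^ (e * j + k) := by rw [← pow_mul, ← pow_add]
    _ ≤ c ^ m := pow_le_pow_of_le_one hc0.le hc1.le hm

private lemma key_bound2 {c a : ℝ} (hc0 : 0 < c) (hc1 : c < 1)
    {e : ℕ} (ha : c ^ e < a) (j i k : ℕ) (hi : i ≠ 0) (hk : e * i ≤ k) :
    a ^ j * c ^ k < a ^ (j + i) := by
  have ha0 : 0 < a := (pow_pos hc0 e).trans ha
  have h2 : c ^ k ≤ c ^ (e * i) := pow_le_pow_of_le_one hc0.le hc1.le hk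
  have h3 : c ^ (e * i) < a ^ i := by
    rw [pow_mul]
    exact pow_lt_pow_left₀ ha (pow_nonneg hc0.le e) hi
  calc a ^ j * c ^ k < a ^ j * a ^ i :=
        mul_lt_mul_of_pos_left (h2.trans_lt h3) (pow_pos ha0 j)
    _ = a ^ (j + i) := (pow_add a j i).symm

private lemma clt {c : ℝ} (hc0 : 0 < c) (hc1 : c < 1) {m n : ℕ} (h : m < n) :
    c ^ n < c ^ m :=
  pow_lt_pow_right_of_lt_one₀ hc0 hc1 h

private lemma pow_inj' {a b : ℝ} (ha : 0 ≤ a) (hb : 0 < b) {n : ℕ} (hn : n ≠ 0)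
    (h : a ^ n = b ^ n) : a = b := by
  rcases lt_trichotomy a b with hl | he | hg
  · exact absurd h (ne_of_lt (pow_lt_pow_left₀ hl ha hn))
  · exact he
  · exact absurd h.symm (ne_of_lt (pow_lt_pow_left₀ hg hb.le hn))

/-- If `r⁵ + 25r − 25 = 0`, `f⁺(x, y) = 0` and `‖y‖⁴ = 5⁻³` (i.e. `v₅(y) = 3/4`),
then `‖x − r‖² = 5⁻¹` (i.e. `v₅(x − r) = 1/2`). -/
theorem abs_x_sub_r_on_affinoid {K : Type*} [Field K]
    (v : AbsoluteValue K ℝ) (hna : IsNonarchimedean v)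
    (hQ : ∀ q : ℚ, v (q : K) = (padicNorm 5 q : ℝ))
    (r x y : K) (hr : r ^ 5 + 25 * r - 25 = 0)
    (hf : fplus x y = 0) (hy : v y ^ 4 = (5 : ℝ)⁻¹ ^ 3) :
    v (x - r) ^ 2 = (5 : ℝ)⁻¹ := by
  haveI : Fact (Nat.Prime 5) := ⟨by norm_num⟩
  set c : ℝ := (5 : ℝ) ^ (-(1/20) : ℝ) with hcdef
  have hc0 : 0 < c := Real.rpow_pos_of_pos (by norm_num) _
  have hc1 : c < 1 := Real.rpow_lt_one_of_one_lt_of_neg (by norm_num) (by norm_num)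
  have hc20 : c ^ 20 = (5 : ℝ)⁻¹ := by
    rw [hcdef, ← Real.rpow_natCast ((5 : ℝ) ^ (-(1/20) : ℝ)) 20,
      ← Real.rpow_mul (by norm_num)]
    norm_num
  have hv5 : v (5 : K) = c ^ 20 := by
    have h := hQ 5
    rw [Rat.cast_ofNat] at h
    have h2 : padicNorm 5 5 = (5 : ℚ)⁻¹ := by
      simpa using padicNorm.padicNorm_p_of_prime (p := 5)
    rw [h, h2, hc20]
    norm_num
  have hv3 : v (3 : K) = 1 := by
    have h := hQ 3
    rw [Rat.cast_ofNat] at h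
    have h2 : padicNorm 5 3 = 1 := by
      simpa using (padicNorm.nat_eq_one_iff (p := 5) 3).mpr (by norm_num)
    rw [h, h2]
    norm_num
  have hv2 : v (2 : K) = 1 := by
    have h := hQ 2
    rw [Rat.cast_ofNat] at h
    have h2 : padicNorm 5 2 = 1 := by
      simpa using (padicNorm.nat_eq_one_iff (p := 5) 2).mpr (by norm_num)
    rw [h, h2]
    norm_num
  have hv25 : v (25 : K) = c ^ 40 := by
    rw [show (25 : K) = 5 * 5 by norm_num, v.map_mul, hv5, ← pow_add]
  have hv15 : v (15 : K) = c ^ 20 := by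
    rw [show (15 : K) = 3 * 5 by norm_num, v.map_mul, hv3, hv5, one_mul]
  have hv10 : v (10 : K) = c ^ 20 := by
    rw [show (10 : K) = 2 * 5 by norm_num, v.map_mul, hv2, hv5, one_mul]
  have hvy : v y = c ^ 15 := by
    refine pow_inj' (v.nonneg y) (pow_pos hc0 15) (n := 4) (by norm_num) ?_
    rw [hy, ← hc20]; ring
  have ht1 : v (y ^ 4) = c ^ 60 := by simp only [map_pow, hvy]; ring
  have ht2 : v (x ^ 5) = v x ^ 5 := map_pow v x 5
  have ht3 : v (5 * x * y ^ 3) = v x * c ^ 65 := by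
    simp only [map_mul, map_pow, hv5, hvy]; ring
  have ht4 : v (15 * x ^ 2 * y ^ 2) = v x ^ 2 * c ^ 50 := by
    simp only [map_mul, map_pow, hv15, hvy]; ring
  have ht5 : v (25 * x ^ 3 * y) = v x ^ 3 * c ^ 55 := by
    simp only [map_mul, map_pow, hv25, hvy]; ring
  have ht6 : v (25 * x ^ 4) = v x ^ 4 * c ^ 40 := by
    simp only [map_mul, map_pow, hv25]; ring
  have ht7 : v (5 * y ^ 3) = c ^ 65 := by
    simp only [map_mul, map_pow, hv5, hvy]; ring
  have ht8 : v (5 * x * y ^ 2) = v x * c ^ 50 := by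
    simp only [map_mul, map_pow, hv5, hvy]; ring
  have ht9 : v (25 * x ^ 3) = v x ^ 3 * c ^ 40 := by
    simp only [map_mul, map_pow, hv25]; ring
  have ht10 : v (15 * y ^ 2) = c ^ 50 := by
    simp only [map_mul, map_pow, hv15, hvy]; ring
  have ht11 : v (25 * x ^ 2) = v x ^ 2 * c ^ 40 := by
    simp only [map_mul, map_pow, hv25]; ring
  have ht12 : v (25 * y) = c ^ 55 := by
    simp only [map_mul, hv25, hvy]; ring
  have ht13 : v (25 * x) = v x * c ^ 40 := by
    simp only [map_mul, hv25]; ring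
  have h0x : 0 ≤ v x := v.nonneg x
  -- Step 1 : v x = c ^ 8
  have hvx : v x = c ^ 8 := by
    rcases lt_trichotomy (v x) (c ^ 8) with h8 | h8 | h8
    · exfalso
      have hB : v (y ^ 4 + -(x ^ 5) + 5 * x * y ^ 3 + 15 * x ^ 2 * y ^ 2 + 25 * x ^ 3 * y
          + 25 * x ^ 4 + 5 * y ^ 3 + 5 * x * y ^ 2 + -(25 * x ^ 3) + 15 * y ^ 2 + 25 * x ^ 2
          + 25 * y + -(25 * x)) < v (25 : K) := by
        rw [hv25]
        refine na_max_lt hna (na_max_lt hna (na_max_lt hna (na_max_lt hna (na_max_lt hna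
          (na_max_lt hna (na_max_lt hna (na_max_lt hna (na_max_lt hna (na_max_lt hna
          (na_max_lt hna (na_max_lt hna ?_ ?_) ?_) ?_) ?_) ?_) ?_) ?_) ?_) ?_) ?_) ?_) ?_
        · rw [ht1]; exact clt hc0 hc1 (by norm_num)
        · rw [v.map_neg, ht2]
          simpa using key_bound hc0 hc1 h0x h8 5 0 40 (by norm_num) (by norm_num)
        · rw [ht3]
          simpa using key_bound hc0 hc1 h0x h8 1 65 40 (by norm_num) (by norm_num)
        · rw [ht4]; exact key_bound hc0 hc1 h0x h8 2 50 40 (by norm_num) (by norm_num)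
        · rw [ht5]; exact key_bound hc0 hc1 h0x h8 3 55 40 (by norm_num) (by norm_num)
        · rw [ht6]; exact key_bound hc0 hc1 h0x h8 4 40 40 (by norm_num) (by norm_num)
        · rw [ht7]; exact clt hc0 hc1 (by norm_num)
        · rw [ht8]
          simpa using key_bound hc0 hc1 h0x h8 1 50 40 (by norm_num) (by norm_num)
        · rw [v.map_neg, ht9]
          exact key_bound hc0 hc1 h0x h8 3 40 40 (by norm_num) (by norm_num)
        · rw [ht10]; exact clt hc0 hc1 (by norm_num)
        · rw [ht11]; exact key_bound hc0 hc1 h0x h8 2 40 40 (by norm_num) (by norm_num)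
        · rw [ht12]; exact clt hc0 hc1 (by norm_num)
        · rw [v.map_neg, ht13]
          simpa using key_bound hc0 hc1 h0x h8 1 40 40 (by norm_num) (by norm_num)
      have hdom := dominate hna (T := fplus x y) (by unfold fplus; ring) hB
      rw [hf, v.map_zero, hv25] at hdom
      exact (pow_pos hc0 40).ne' hdom.symm
    · exact h8
    · exfalso
      have hB : v (y ^ 4 + 5 * x * y ^ 3 + 15 * x ^ 2 * y ^ 2 + 25 * x ^ 3 * y
          + 25 * x ^ 4 + 5 * y ^ 3 + 5 * x * y ^ 2 + -(25 * x ^ 3) + 15 * y ^ 2 + 25 * x ^ 2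
          + 25 * y + -(25 * x) + 25) < v (-(x ^ 5)) := by
        rw [v.map_neg, ht2]
        refine na_max_lt hna (na_max_lt hna (na_max_lt hna (na_max_lt hna (na_max_lt hna
          (na_max_lt hna (na_max_lt hna (na_max_lt hna (na_max_lt hna (na_max_lt hna
          (na_max_lt hna (na_max_lt hna ?_ ?_) ?_) ?_) ?_) ?_) ?_) ?_) ?_) ?_) ?_) ?_) ?_
        · rw [ht1]
          simpa using key_bound2 hc0 hc1 h8 0 5 60 (by norm_num) (by norm_num)
        · rw [ht3]
          simpa using key_bound2 hc0 hc1 h8 1 4 65 (by norm_num) (by norm_num)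
        · rw [ht4]
          simpa using key_bound2 hc0 hc1 h8 2 3 50 (by norm_num) (by norm_num)
        · rw [ht5]
          simpa using key_bound2 hc0 hc1 h8 3 2 55 (by norm_num) (by norm_num)
        · rw [ht6]
          simpa using key_bound2 hc0 hc1 h8 4 1 40 (by norm_num) (by norm_num)
        · rw [ht7]
          simpa using key_bound2 hc0 hc1 h8 0 5 65 (by norm_num) (by norm_num)
        · rw [ht8]
          simpa using key_bound2 hc0 hc1 h8 1 4 50 (by norm_num) (by norm_num)
        · rw [v.map_neg, ht9]
          simpa using key_bound2 hc0 hc1 h8 3 2 40 (by norm_num) (by norm_num)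
        · rw [ht10]
          simpa using key_bound2 hc0 hc1 h8 0 5 50 (by norm_num) (by norm_num)
        · rw [ht11]
          simpa using key_bound2 hc0 hc1 h8 2 3 40 (by norm_num) (by norm_num)
        · rw [ht12]
          simpa using key_bound2 hc0 hc1 h8 0 5 55 (by norm_num) (by norm_num)
        · rw [v.map_neg, ht13]
          simpa using key_bound2 hc0 hc1 h8 1 4 40 (by norm_num) (by norm_num)
        · rw [hv25]
          simpa using key_bound2 hc0 hc1 h8 0 5 40 (by norm_num) (by norm_num)
      have hdom := dominate hna (T := fplus x y) (by unfold fplus; ring) hB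
      rw [hf, v.map_zero, v.map_neg, ht2] at hdom
      exact (pow_pos ((pow_pos hc0 8).trans h8) 5).ne' hdom.symm
  -- Step 2 : v r = c ^ 8
  have h0r : 0 ≤ v r := v.nonneg r
  have hvr : v r = c ^ 8 := by
    have e1 : v (25 * r) = v r * c ^ 40 := by simp only [map_mul, hv25]; ring
    rcases lt_trichotomy (v r) (c ^ 8) with h8 | h8 | h8
    · exfalso
      have hB : v (r ^ 5 + 25 * r) < v (-(25 : K)) := by
        rw [v.map_neg, hv25]
        refine na_max_lt hna ?_ ?_
        · rw [map_pow]
          simpa using key_bound hc0 hc1 h0r h8 5 0 40 (by norm_num) (by norm_num)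
        · rw [e1]
          simpa using key_bound hc0 hc1 h0r h8 1 40 40 (by norm_num) (by norm_num)
      have hdom := dominate hna (T := r ^ 5 + 25 * r - 25) (by ring) hB
      rw [hr, v.map_zero, v.map_neg, hv25] at hdom
      exact (pow_pos hc0 40).ne' hdom.symm
    · exact h8
    · exfalso
      have hB : v (25 * r + -(25 : K)) < v (r ^ 5) := by
        rw [map_pow]
        refine na_max_lt hna ?_ ?_
        · rw [e1]
          simpa using key_bound2 hc0 hc1 h8 1 4 40 (by norm_num) (by norm_num)
        · rw [v.map_neg, hv25]
          simpa using key_bound2 hc0 hc1 h8 0 5 40 (by norm_num) (by norm_num)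
      have hdom := dominate hna (T := r ^ 5 + 25 * r - 25) (by ring) hB
      rw [hr, v.map_zero, map_pow] at hdom
      exact (pow_pos ((pow_pos hc0 8).trans h8) 5).ne' hdom.symm
  -- Step 3 : the valuation of E is c ^ 50
  have hEB : v (y ^ 4 + 5 * x * y ^ 3 + 15 * x ^ 2 * y ^ 2 + 25 * x ^ 3 * y + 25 * x ^ 4
      + 5 * y ^ 3 + 5 * x * y ^ 2 + -(25 * x ^ 3) + 25 * x ^ 2 + 25 * y) < v (15 * y ^ 2) := by
    rw [ht10]
    refine na_max_lt hna (na_max_lt hna (na_max_lt hna (na_max_lt hna (na_max_lt hna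
      (na_max_lt hna (na_max_lt hna (na_max_lt hna (na_max_lt hna ?_ ?_) ?_) ?_) ?_)
      ?_) ?_) ?_) ?_) ?_
    · rw [ht1]; exact clt hc0 hc1 (by norm_num)
    · rw [ht3, hvx, ← pow_add]; exact clt hc0 hc1 (by norm_num)
    · rw [ht4, hvx, ← pow_mul, ← pow_add]; exact clt hc0 hc1 (by norm_num)
    · rw [ht5, hvx, ← pow_mul, ← pow_add]; exact clt hc0 hc1 (by norm_num)
    · rw [ht6, hvx, ← pow_mul, ← pow_add]; exact clt hc0 hc1 (by norm_num)
    · rw [ht7]; exact clt hc0 hc1 (by norm_num)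
    · rw [ht8, hvx, ← pow_add]; exact clt hc0 hc1 (by norm_num)
    · rw [v.map_neg, ht9, hvx, ← pow_mul, ← pow_add]; exact clt hc0 hc1 (by norm_num)
    · rw [ht11, hvx, ← pow_mul, ← pow_add]; exact clt hc0 hc1 (by norm_num)
    · rw [ht12]; exact clt hc0 hc1 (by norm_num)
  have hE : v (15 * y ^ 2 + (y ^ 4 + 5 * x * y ^ 3 + 15 * x ^ 2 * y ^ 2 + 25 * x ^ 3 * y
      + 25 * x ^ 4 + 5 * y ^ 3 + 5 * x * y ^ 2 + -(25 * x ^ 3) + 25 * x ^ 2 + 25 * y))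
      = c ^ 50 := by
    rw [na_add_eq hna hEB, ht10]
  -- Step 4 : valuation of the linear coefficient
  have hg' : v ((25 : K) + 5 * r ^ 4) = c ^ 40 := by
    have hb : v (5 * r ^ 4) < v (25 : K) := by
      simp only [map_mul, map_pow, hv5, hvr, hv25]
      rw [← pow_mul, ← pow_add]
      exact clt hc0 hc1 (by norm_num)
    rw [na_add_eq hna hb, hv25]
  -- Step 5 : the key algebraic identity
  have hf' : y ^ 4 - x ^ 5 + 5 * x * y ^ 3 + 15 * x ^ 2 * y ^ 2 + 25 * x ^ 3 * y + 25 * x ^ 4 +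
      5 * y ^ 3 + 5 * x * y ^ 2 - 25 * x ^ 3 + 15 * y ^ 2 + 25 * x ^ 2 + 25 * y - 25 * x + 25
      = 0 := hf
  have heq : (x - r) ^ 5 + (5 * r * (x - r) ^ 4 + 10 * r ^ 2 * (x - r) ^ 3
      + 10 * r ^ 3 * (x - r) ^ 2 + (25 + 5 * r ^ 4) * (x - r))
      = 15 * y ^ 2 + (y ^ 4 + 5 * x * y ^ 3 + 15 * x ^ 2 * y ^ 2 + 25 * x ^ 3 * y
      + 25 * x ^ 4 + 5 * y ^ 3 + 5 * x * y ^ 2 + -(25 * x ^ 3) + 25 * x ^ 2 + 25 * y) := by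
    linear_combination -hf' - hr
  -- Step 6 : trichotomy on v (x - r)
  have h0u : 0 ≤ v (x - r) := v.nonneg _
  have hd5 : v ((x - r) ^ 5) = v (x - r) ^ 5 := map_pow v _ 5
  have hd4 : v (5 * r * (x - r) ^ 4) = v (x - r) ^ 4 * c ^ 28 := by
    simp only [map_mul, map_pow, hv5, hvr]; ring
  have hd3 : v (10 * r ^ 2 * (x - r) ^ 3) = v (x - r) ^ 3 * c ^ 36 := by
    simp only [map_mul, map_pow, hv10, hvr]; ring
  have hd2 : v (10 * r ^ 3 * (x - r) ^ 2) = v (x - r) ^ 2 * c ^ 44 := by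
    simp only [map_mul, map_pow, hv10, hvr]; ring
  have hd1 : v ((25 + 5 * r ^ 4) * (x - r)) = v (x - r) * c ^ 40 := by
    rw [map_mul, hg', mul_comm]
  rcases lt_trichotomy (v (x - r)) (c ^ 10) with h10 | h10 | h10
  · exfalso
    have hlt : v ((x - r) ^ 5 + (5 * r * (x - r) ^ 4 + 10 * r ^ 2 * (x - r) ^ 3
        + 10 * r ^ 3 * (x - r) ^ 2 + (25 + 5 * r ^ 4) * (x - r))) < c ^ 50 := by
      refine na_max_lt hna ?_ (na_max_lt hna (na_max_lt hna (na_max_lt hna ?_ ?_) ?_) ?_)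
      · rw [hd5]
        simpa using key_bound hc0 hc1 h0u h10 5 0 50 (by norm_num) (by norm_num)
      · rw [hd4]; exact key_bound hc0 hc1 h0u h10 4 28 50 (by norm_num) (by norm_num)
      · rw [hd3]; exact key_bound hc0 hc1 h0u h10 3 36 50 (by norm_num) (by norm_num)
      · rw [hd2]; exact key_bound hc0 hc1 h0u h10 2 44 50 (by norm_num) (by norm_num)
      · rw [hd1]
        simpa using key_bound hc0 hc1 h0u h10 1 40 50 (by norm_num) (by norm_num)
    rw [heq, hE] at hlt
    exact lt_irrefl _ hlt
  · rw [h10, ← hc20]; ring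
  · exfalso
    have hb4 : v (5 * r * (x - r) ^ 4) < v (x - r) ^ 5 := by
      rw [hd4]; simpa using key_bound2 hc0 hc1 h10 4 1 28 (by norm_num) (by norm_num)
    have hb3 : v (10 * r ^ 2 * (x - r) ^ 3) < v (x - r) ^ 5 := by
      rw [hd3]; simpa using key_bound2 hc0 hc1 h10 3 2 36 (by norm_num) (by norm_num)
    have hb2 : v (10 * r ^ 3 * (x - r) ^ 2) < v (x - r) ^ 5 := by
      rw [hd2]; simpa using key_bound2 hc0 hc1 h10 2 3 44 (by norm_num) (by norm_num)
    have hb1 : v ((25 + 5 * r ^ 4) * (x - r)) < v (x - r) ^ 5 := by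
      rw [hd1]; simpa using key_bound2 hc0 hc1 h10 1 4 40 (by norm_num) (by norm_num)
    have hBB : v (5 * r * (x - r) ^ 4 + 10 * r ^ 2 * (x - r) ^ 3 + 10 * r ^ 3 * (x - r) ^ 2
        + (25 + 5 * r ^ 4) * (x - r)) < v ((x - r) ^ 5) := by
      rw [hd5]
      exact na_max_lt hna (na_max_lt hna (na_max_lt hna hb4 hb3) hb2) hb1
    have hdom := dominate hna heq hBB
    have hlt : (c : ℝ) ^ 50 < v (x - r) ^ 5 := by
      simpa using key_bound2 hc0 hc1 h10 0 5 50 (by norm_num) (by norm_num)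
    rw [hE, hd5] at hdom
    exact absurd hdom (ne_of_lt hlt)
end

section
/- Every y ∈ K for which there exists x ∈ K with y² = 20x and f⁺(x, y) = 0 satisfies ‖y‖¹⁰ = 5⁻⁷; that is, the y-coordinates of all 10 ramification points of X₀(125) → X₀(125)⁺ have 5-adic valuation 7/10. -/
private lemma vadd_lt {K : Type*} [Field K] (v : AbsoluteValue K ℝ)
    (hna : IsNonarchimedean v) {a b : K} {M : ℝ} (ha : v a < M) (hb : v b < M) :
    v (a + b) < M :=
  (hna a b).trans_lt (max_lt ha hb)

/-- Case A term bound: if `t^10 > 5⁻⁷` and `c^10 ≤ (5⁻⁷)^(10-i)` with `i < 10`,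
then `c * t^i < t^10`. -/
private lemma termA (t c : ℝ) (ht : 0 ≤ t) (hc : 0 ≤ c) (i : ℕ) (hi : i < 10)
    (hs : ((5:ℝ)⁻¹) ^ 7 < t ^ 10) (hnum : c ^ 10 ≤ (((5:ℝ)⁻¹) ^ 7) ^ (10 - i)) :
    c * t ^ i < t ^ 10 := by
  have h0 : (0:ℝ) < ((5:ℝ)⁻¹) ^ 7 := by positivity
  have htpos : (0:ℝ) < t ^ 10 := h0.trans hs
  refine lt_of_pow_lt_pow_left₀ 10 htpos.le ?_
  calc (c * t ^ i) ^ 10 = c ^ 10 * (t ^ 10) ^ i := by ring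
    _ ≤ (((5:ℝ)⁻¹) ^ 7) ^ (10 - i) * (t ^ 10) ^ i := by
        exact mul_le_mul_of_nonneg_right hnum (by positivity)
    _ < (t ^ 10) ^ (10 - i) * (t ^ 10) ^ i := by
        refine mul_lt_mul_of_pos_right ?_ (by positivity)
        exact pow_lt_pow_left₀ hs h0.le (by omega)
    _ = (t ^ 10) ^ 10 := by rw [← pow_add]; congr 1; omega

/-- Case B term bound: if `t^10 ≤ 5⁻⁷` and `c^10 * (5⁻⁷)^i < (5⁻⁷)^10`,
then `c * t^i < 5⁻⁷`. -/
private lemma termB (t c : ℝ) (ht : 0 ≤ t) (hc : 0 ≤ c) (i : ℕ)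
    (hs : t ^ 10 ≤ ((5:ℝ)⁻¹) ^ 7)
    (hnum : c ^ 10 * (((5:ℝ)⁻¹) ^ 7) ^ i < (((5:ℝ)⁻¹) ^ 7) ^ 10) :
    c * t ^ i < ((5:ℝ)⁻¹) ^ 7 := by
  have h0 : (0:ℝ) < ((5:ℝ)⁻¹) ^ 7 := by positivity
  refine lt_of_pow_lt_pow_left₀ 10 h0.le ?_
  calc (c * t ^ i) ^ 10 = c ^ 10 * (t ^ 10) ^ i := by ring
    _ ≤ c ^ 10 * (((5:ℝ)⁻¹) ^ 7) ^ i := by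
        refine mul_le_mul_of_nonneg_left ?_ (by positivity)
        exact pow_le_pow_left₀ (by positivity) hs i
    _ < (((5:ℝ)⁻¹) ^ 7) ^ 10 := hnum

/-- The `y`-coordinates of the 10 ramification points of `X₀(125) → X₀(125)⁺`
(the solutions of `y² = 20x`, `f⁺(x,y) = 0`) all satisfy `‖y‖¹⁰ = 5⁻⁷`
(5-adic valuation 7/10). -/
theorem abs_y_of_ramification_point {K : Type*} [Field K]
    (v : AbsoluteValue K ℝ) (hna : IsNonarchimedean v)
    (hQ : ∀ q : ℚ, v (q : K) = (padicNorm 5 q : ℝ)) :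
    ∀ y : K, (∃ x : K, y ^ 2 = 20 * x ∧ fplus x y = 0) →
      v y ^ 10 = (5 : ℝ)⁻¹ ^ 7 := by
  rintro y ⟨x, hx, hf⟩
  haveI : Fact (Nat.Prime 5) := ⟨by norm_num⟩
  -- value of v at 5
  have hv5 : v (5 : K) = (5:ℝ)⁻¹ := by
    have h := hQ 5
    rw [show (((5:ℚ)):K) = (5:K) by norm_num] at h
    rw [h, show ((5:ℚ)) = (((5:ℕ)):ℚ) by norm_num, padicNorm.padicNorm_p (by norm_num)]
    push_cast; ring
  -- v of naturals prime to 5 is 1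
  have hunit : ∀ m : ℕ, ¬ (5 ∣ m) → v ((m : ℕ) : K) = 1 := by
    intro m hm
    have h := hQ (m : ℚ)
    rw [Rat.cast_natCast] at h
    rw [h, (padicNorm.nat_eq_one_iff m).2 hm]
    norm_num
  have key : ∀ (k m : ℕ), ¬ (5 ∣ m) → v (((5^k * m : ℕ)) : K) = (5:ℝ)⁻¹ ^ k := by
    intro k m hm
    push_cast
    rw [map_mul, map_pow, hv5, hunit m hm, mul_one]
  -- values at the coefficients
  have v500 : v (500 : K) = (5:ℝ)⁻¹ ^ 3 := by
    rw [show (500:K) = ((5^3 * 4 : ℕ) : K) by norm_num]; exact key 3 4 (by norm_num)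
  have v10000 : v (10000 : K) = (5:ℝ)⁻¹ ^ 4 := by
    rw [show (10000:K) = ((5^4 * 16 : ℕ) : K) by norm_num]; exact key 4 16 (by norm_num)
  have v110000 : v (110000 : K) = (5:ℝ)⁻¹ ^ 4 := by
    rw [show (110000:K) = ((5^4 * 176 : ℕ) : K) by norm_num]; exact key 4 176 (by norm_num)
  have v800000 : v (800000 : K) = (5:ℝ)⁻¹ ^ 5 := by
    rw [show (800000:K) = ((5^5 * 256 : ℕ) : K) by norm_num]; exact key 5 256 (by norm_num)
  have v4200000 : v (4200000 : K) = (5:ℝ)⁻¹ ^ 5 := by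
    rw [show (4200000:K) = ((5^5 * 1344 : ℕ) : K) by norm_num]; exact key 5 1344 (by norm_num)
  have v16000000 : v (16000000 : K) = (5:ℝ)⁻¹ ^ 6 := by
    rw [show (16000000:K) = ((5^6 * 1024 : ℕ) : K) by norm_num]; exact key 6 1024 (by norm_num)
  have v44000000 : v (44000000 : K) = (5:ℝ)⁻¹ ^ 6 := by
    rw [show (44000000:K) = ((5^6 * 2816 : ℕ) : K) by norm_num]; exact key 6 2816 (by norm_num)
  have v80000000 : v (80000000 : K) = (5:ℝ)⁻¹ ^ 7 := by
    rw [show (80000000:K) = ((5^7 * 1024 : ℕ) : K) by norm_num]; exact key 7 1024 (by norm_num)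
  -- the polynomial relation satisfied by y
  have hP : y^10 = 500*y^8 + 10000*y^7 + 110000*y^6 + 800000*y^5 + 4200000*y^4
      + 16000000*y^3 + 44000000*y^2 + 80000000*y^1 + 80000000 := by
    have hf' : y ^ 4 - x ^ 5 + 5 * x * y ^ 3 + 15 * x ^ 2 * y ^ 2 + 25 * x ^ 3 * y + 25 * x ^ 4 +
        5 * y ^ 3 + 5 * x * y ^ 2 - 25 * x ^ 3 + 15 * y ^ 2 + 25 * x ^ 2 + 25 * y - 25 * x + 25
        = 0 := hf
    linear_combination (-(20:K)^5) * hf' +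
      (160000*x^4 + 8000*x^3*y^2 - 4000000*x^3 + 400*x^2*y^4 - 200000*x^2*y^2
        - 4000000*x^2*y + 4000000*x^2 + 20*x*y^6 - 10000*x*y^4 - 200000*x*y^3
        - 2200000*x*y^2 - 4000000*x + y^8 - 500*y^6 - 10000*y^5 - 110000*y^4
        - 800000*y^3 - 1000000*y^2 + 4000000) * hx
  set t : ℝ := v y with hty
  have ht : 0 ≤ t := v.nonneg y
  have hvterm : ∀ (c : K) (i : ℕ), v (c * y ^ i) = v c * t ^ i := by
    intro c i; rw [map_mul, map_pow]
  rcases lt_trichotomy (t ^ 10) ((5:ℝ)⁻¹ ^ 7) with hlt | heq | hgt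
  · -- case B : constant term dominates, contradiction
    exfalso
    have hP' : (80000000 : K) = y^10 + -(500*y^8) + -(10000*y^7) + -(110000*y^6)
        + -(800000*y^5) + -(4200000*y^4) + -(16000000*y^3) + -(44000000*y^2)
        + -(80000000*y^1) := by linear_combination -hP
    have bound : v ((80000000 : K)) < (5:ℝ)⁻¹ ^ 7 := by
      rw [hP']
      refine vadd_lt v hna (vadd_lt v hna (vadd_lt v hna (vadd_lt v hna (vadd_lt v hna
        (vadd_lt v hna (vadd_lt v hna (vadd_lt v hna ?_ ?_) ?_) ?_) ?_) ?_) ?_) ?_) ?_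
      · rw [map_pow]; exact hlt
      · rw [v.map_neg, hvterm, v500]
        exact termB t _ ht (by positivity) 8 hlt.le (by norm_num)
      · rw [v.map_neg, hvterm, v10000]
        exact termB t _ ht (by positivity) 7 hlt.le (by norm_num)
      · rw [v.map_neg, hvterm, v110000]
        exact termB t _ ht (by positivity) 6 hlt.le (by norm_num)
      · rw [v.map_neg, hvterm, v800000]
        exact termB t _ ht (by positivity) 5 hlt.le (by norm_num)
      · rw [v.map_neg, hvterm, v4200000]
        exact termB t _ ht (by positivity) 4 hlt.le (by norm_num)
      · rw [v.map_neg, hvterm, v16000000]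
        exact termB t _ ht (by positivity) 3 hlt.le (by norm_num)
      · rw [v.map_neg, hvterm, v44000000]
        exact termB t _ ht (by positivity) 2 hlt.le (by norm_num)
      · rw [v.map_neg, hvterm, v80000000]
        exact termB t _ ht (by positivity) 1 hlt.le (by norm_num)
    rw [v80000000] at bound
    exact lt_irrefl _ bound
  · exact heq
  · -- case A : leading term dominates, contradiction
    exfalso
    have bound : v (500*y^8 + 10000*y^7 + 110000*y^6 + 800000*y^5 + 4200000*y^4
        + 16000000*y^3 + 44000000*y^2 + 80000000*y^1 + 80000000) < t ^ 10 := by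
      refine vadd_lt v hna (vadd_lt v hna (vadd_lt v hna (vadd_lt v hna (vadd_lt v hna
        (vadd_lt v hna (vadd_lt v hna (vadd_lt v hna ?_ ?_) ?_) ?_) ?_) ?_) ?_) ?_) ?_
      · rw [hvterm, v500]
        exact termA t _ ht (by positivity) 8 (by norm_num) hgt (by norm_num)
      · rw [hvterm, v10000]
        exact termA t _ ht (by positivity) 7 (by norm_num) hgt (by norm_num)
      · rw [hvterm, v110000]
        exact termA t _ ht (by positivity) 6 (by norm_num) hgt (by norm_num)
      · rw [hvterm, v800000]
        exact termA t _ ht (by positivity) 5 (by norm_num) hgt (by norm_num)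
      · rw [hvterm, v4200000]
        exact termA t _ ht (by positivity) 4 (by norm_num) hgt (by norm_num)
      · rw [hvterm, v16000000]
        exact termA t _ ht (by positivity) 3 (by norm_num) hgt (by norm_num)
      · rw [hvterm, v44000000]
        exact termA t _ ht (by positivity) 2 (by norm_num) hgt (by norm_num)
      · rw [hvterm, v80000000]
        exact termA t _ ht (by positivity) 1 (by norm_num) hgt (by norm_num)
      · rw [v80000000]
        have : (80000000 : K) = 80000000 * y ^ 0 := by ring
        calc (5:ℝ)⁻¹ ^ 7 = (5:ℝ)⁻¹ ^ 7 * t ^ 0 := by ring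
          _ < t ^ 10 := termA t _ ht (by positivity) 0 (by norm_num) hgt (by norm_num)
    rw [← hP, map_pow] at bound
    exact lt_irrefl _ bound
end

section
/- Let r ∈ K satisfy r⁵ + 25r − 25 = 0, and let x, y ∈ K satisfy f⁺(x, y) = 0 and 5^(−3/4) < ‖y‖ < 5^(−1/2). Then ‖x − r‖⁵ = ‖y‖²/5; in particular 5^(−1/2) < ‖x − r‖ < 5^(−2/5). (This is the key estimate showing that the region 1/2 < v₅(y) < 3/4 of X₀(125)⁺ is an annulus on which the curve is well-approximated by x₀⁵ = 15y² with x₀ = x − r.) -/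
private instance : Fact (Nat.Prime 5) := ⟨by norm_num⟩

/-- `5^a` as a function of a real exponent. -/
private noncomputable def P5 (a : ℝ) : ℝ := (5 : ℝ) ^ a

private lemma P5_pos (a : ℝ) : 0 < P5 a := Real.rpow_pos_of_pos (by norm_num) a

private lemma P5_nonneg (a : ℝ) : 0 ≤ P5 a := (P5_pos a).le

private lemma P5_lt {a b : ℝ} (h : a < b) : P5 a < P5 b :=
  (Real.rpow_lt_rpow_left_iff (by norm_num)).mpr h

private lemma P5_mul' {a b c : ℝ} (h : a + b = c) : P5 a * P5 b = P5 c := by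
  rw [P5, P5, P5, ← Real.rpow_add (by norm_num), h]

private lemma P5_pow' {a b : ℝ} (n : ℕ) (h : a * n = b) : (P5 a) ^ n = P5 b := by
  rw [P5, P5, ← Real.rpow_natCast ((5:ℝ)^a) n, ← Real.rpow_mul (by norm_num), h]

private lemma P5_neg_one : P5 (-1) = 1/5 := by
  rw [P5, show ((-1):ℝ) = ((-1:ℤ):ℝ) by norm_num, Real.rpow_intCast]; norm_num

private lemma P5_neg_two : P5 (-2) = 1/25 := by
  rw [P5, show ((-2):ℝ) = ((-2:ℤ):ℝ) by norm_num, Real.rpow_intCast]; norm_num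

private lemma P5_zero : P5 0 = 1 := Real.rpow_zero 5

private lemma P5_lt_one {a : ℝ} (h : a < 0) : P5 a < 1 := by
  rw [← P5_zero]; exact P5_lt h

section NA

variable {K : Type*} [Field K] {v : AbsoluteValue K ℝ}

private lemma nadd_lt (hna : IsNonarchimedean v) {a b : K} {t : ℝ}
    (ha : v a < t) (hb : v b < t) : v (a + b) < t :=
  lt_of_le_of_lt (hna a b) (max_lt ha hb)

private lemma nsub_lt (hna : IsNonarchimedean v) {a b : K} {t : ℝ}
    (ha : v a < t) (hb : v b < t) : v (a - b) < t := by
  rw [sub_eq_add_neg]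
  exact nadd_lt hna ha (by rwa [v.map_neg])

private lemma nadd_le (hna : IsNonarchimedean v) {a b : K} {t : ℝ}
    (ha : v a ≤ t) (hb : v b ≤ t) : v (a + b) ≤ t :=
  le_trans (hna a b) (max_le ha hb)

private lemma nsub_le (hna : IsNonarchimedean v) {a b : K} {t : ℝ}
    (ha : v a ≤ t) (hb : v b ≤ t) : v (a - b) ≤ t := by
  rw [sub_eq_add_neg]
  exact nadd_le hna ha (by rwa [v.map_neg])

/-- the ultrametric equality: the dominant term wins. -/
private lemma nadd_eq (hna : IsNonarchimedean v) {a b : K} (h : v b < v a) :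
    v (a + b) = v a := by
  refine le_antisymm (le_trans (hna a b) (max_le le_rfl h.le)) ?_
  by_contra hlt
  push_neg at hlt
  have h2 : v a ≤ max (v (a + b)) (v b) := by
    have h3 := hna (a + b) (-b)
    simpa [v.map_neg] using h3
  exact absurd (h2.trans_lt (max_lt hlt h)) (lt_irrefl _)

end NA

/-- auxiliary bound: `t * b^i < b^5` provided `t ≤ s < b^j`, `i + j = 5`. -/
private lemma term_bound {b t s : ℝ} (hb : 0 < b) (i j : ℕ) (hij : i + j = 5)
    (htu : t ≤ s) (hs : s < b ^ j) (ht : 0 ≤ t) : t * b ^ i < b ^ 5 := by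
  calc t * b ^ i ≤ s * b ^ i := mul_le_mul_of_nonneg_right htu (pow_nonneg hb.le i)
    _ < b ^ j * b ^ i := mul_lt_mul_of_pos_right hs (pow_pos hb i)
    _ = b ^ 5 := by rw [← pow_add]; congr 1; omega

set_option maxHeartbeats 2000000 in
/-- On the region `1/2 < v₅(y) < 3/4` of `X₀(125)⁺`, with `r` a root of
`X⁵ + 25X − 25`, one has `‖x − r‖⁵ = ‖y‖²/5`; in particular
`5^(−1/2) < ‖x − r‖ < 5^(−2/5)`. -/
theorem annulus_key_estimate {K : Type*} [Field K]
    (v : AbsoluteValue K ℝ) (hna : IsNonarchimedean v)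
    (hQ : ∀ q : ℚ, v (q : K) = (padicNorm 5 q : ℝ))
    (r x y : K) (hr : r ^ 5 + 25 * r - 25 = 0) (hf : fplus x y = 0)
    (hy₁ : (5 : ℝ) ^ (-(3 / 4) : ℝ) < v y) (hy₂ : v y < (5 : ℝ) ^ (-(1 / 2) : ℝ)) :
    v (x - r) ^ 5 = v y ^ 2 / 5 ∧
      (5 : ℝ) ^ (-(1 / 2) : ℝ) < v (x - r) ∧ v (x - r) < (5 : ℝ) ^ (-(2 / 5) : ℝ) := by
  -- values of `v` on small integers
  have h5 : v 5 = 1/5 := by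
    have h := hQ 5
    rw [show ((5:ℚ):K) = (5:K) by norm_num] at h
    rw [h, show ((5:ℚ)) = ((5:ℕ):ℚ) by norm_num, padicNorm.padicNorm_p (by norm_num)]
    norm_num
  have hv3 : v 3 = 1 := by
    have h := hQ 3
    rw [show ((3:ℚ):K) = (3:K) by norm_num] at h
    rw [h, show ((3:ℚ)) = ((3:ℕ):ℚ) by norm_num, (padicNorm.nat_eq_one_iff 3).mpr (by norm_num)]
    norm_num
  have hv2 : v 2 = 1 := by
    have h := hQ 2
    rw [show ((2:ℚ):K) = (2:K) by norm_num] at h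
    rw [h, show ((2:ℚ)) = ((2:ℕ):ℚ) by norm_num, (padicNorm.nat_eq_one_iff 2).mpr (by norm_num)]
    norm_num
  have h25 : v 25 = 1/25 := by
    rw [show (25:K) = 5*5 by norm_num, map_mul, h5]; norm_num
  have h15 : v 15 = 1/5 := by
    rw [show (15:K) = 3*5 by norm_num, map_mul, hv3, h5]; norm_num
  have h10 : v 10 = 1/5 := by
    rw [show (10:K) = 2*5 by norm_num, map_mul, hv2, h5]; norm_num
  have h25' : v 25 = P5 (-2) := by rw [h25, P5_neg_two]
  -- facts about `v y`
  have hc1 : P5 (-(3/4)) < v y := hy₁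
  have hc2 : v y < P5 (-(1/2)) := hy₂
  have hc0 : (0:ℝ) ≤ v y := v.nonneg y
  have hcpos : (0:ℝ) < v y := lt_of_le_of_lt (P5_nonneg _) hc1
  have hcc1 : v y < 1 := hc2.trans (P5_lt_one (by norm_num))
  have hcc2s : v y ^ 2 < P5 (-1) := by
    have h := pow_lt_pow_left₀ hc2 hc0 (two_ne_zero)
    rwa [P5_pow' 2 (by norm_num : (-(1/2):ℝ) * 2 = -1)] at h
  have hcc3 : v y ^ 3 ≤ P5 (-(3/2)) := by
    have h := pow_lt_pow_left₀ hc2 hc0 (three_ne_zero)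
    rw [P5_pow' 3 (by norm_num : (-(1/2):ℝ) * 3 = -(3/2))] at h
    exact h.le
  have hcc4s : v y ^ 4 < P5 (-2) := by
    have h := pow_lt_pow_left₀ hc2 hc0 (four_ne_zero)
    rwa [P5_pow' 4 (by norm_num : (-(1/2):ℝ) * 4 = -2)] at h
  have hcc2lb : P5 (-(3/2)) < v y ^ 2 := by
    have h := pow_lt_pow_left₀ hc1 (P5_nonneg _) (two_ne_zero)
    rwa [P5_pow' 2 (by norm_num : (-(3/4):ℝ) * 2 = -(3/2))] at h
  -- `v r = 5^(-2/5)`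
  have hr5 : r ^ 5 = 25 - 25 * r := by linear_combination hr
  have hR5le : v r ^ 5 ≤ max (1/25) (1/25 * v r) := by
    have h := nsub_le hna (le_max_left (v 25) (v (25 * r))) (le_max_right (v 25) (v (25*r)))
    rw [← hr5, map_pow, map_mul, h25] at h
    exact h
  have hRlt1 : v r < 1 := by
    by_contra hR1
    push_neg at hR1
    have h1 : max (1/25) (1/25 * v r) = 1/25 * v r := max_eq_right (by nlinarith)
    rw [h1] at hR5le
    have h2 : v r ^ 1 ≤ v r ^ 5 := pow_le_pow_right₀ hR1 (by norm_num)
    rw [pow_one] at h2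
    nlinarith
  have hR5 : v r ^ 5 = 1/25 := by
    have h : v (25 - 25 * r) = v 25 := by
      rw [sub_eq_add_neg]
      refine nadd_eq hna ?_
      rw [v.map_neg, map_mul, h25]
      nlinarith [v.nonneg r]
    rw [← map_pow, hr5, h, h25]
  have hRval : v r = P5 (-(2/5)) := by
    rcases lt_trichotomy (v r) (P5 (-(2/5))) with h | h | h
    · exfalso
      have h2 := pow_lt_pow_left₀ h (v.nonneg r) (by norm_num : (5:ℕ) ≠ 0)
      rw [P5_pow' 5 (by norm_num : (-(2/5):ℝ) * 5 = -2), P5_neg_two] at h2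
      linarith [hR5]
    · exact h
    · exfalso
      have h2 := pow_lt_pow_left₀ h (P5_nonneg _) (by norm_num : (5:ℕ) ≠ 0)
      rw [P5_pow' 5 (by norm_num : (-(2/5):ℝ) * 5 = -2), P5_neg_two] at h2
      linarith [hR5]
  -- unfold the curve equation
  have hf' : y ^ 4 - x ^ 5 + 5 * x * y ^ 3 + 15 * x ^ 2 * y ^ 2 + 25 * x ^ 3 * y + 25 * x ^ 4 +
      5 * y ^ 3 + 5 * x * y ^ 2 - 25 * x ^ 3 + 15 * y ^ 2 + 25 * x ^ 2 + 25 * y - 25 * x + 25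
      = (0:K) := hf
  -- Step 2 : `v x ≤ 5^(-2/5)`
  have hble : v x ≤ P5 (-(2/5)) := by
    by_contra hbig
    push_neg at hbig
    have hb0 : (0:ℝ) < v x := lt_of_le_of_lt (P5_nonneg _) hbig
    have hb2 : P5 (-(4/5)) < v x ^ 2 := by
      have h := pow_lt_pow_left₀ hbig (P5_nonneg _) (two_ne_zero)
      rwa [P5_pow' 2 (by norm_num : (-(2/5):ℝ) * 2 = -(4/5))] at h
    have hb3 : P5 (-(6/5)) < v x ^ 3 := by
      have h := pow_lt_pow_left₀ hbig (P5_nonneg _) (three_ne_zero)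
      rwa [P5_pow' 3 (by norm_num : (-(2/5):ℝ) * 3 = -(6/5))] at h
    have hb4 : P5 (-(8/5)) < v x ^ 4 := by
      have h := pow_lt_pow_left₀ hbig (P5_nonneg _) (four_ne_zero)
      rwa [P5_pow' 4 (by norm_num : (-(2/5):ℝ) * 4 = -(8/5))] at h
    have hb5 : P5 (-2) < v x ^ 5 := by
      have h := pow_lt_pow_left₀ hbig (P5_nonneg _) (by norm_num : (5:ℕ) ≠ 0)
      rwa [P5_pow' 5 (by norm_num : (-(2/5):ℝ) * 5 = -2)] at h
    have hx5 : x ^ 5 = y ^ 4 + 5 * x * y ^ 3 + 15 * x ^ 2 * y ^ 2 + 25 * x ^ 3 * y + 25 * x ^ 4 +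
        5 * y ^ 3 + 5 * x * y ^ 2 - 25 * x ^ 3 + 15 * y ^ 2 + 25 * x ^ 2 + 25 * y - 25 * x + 25 := by
      linear_combination -hf'
    have T1 : v (y ^ 4) < v x ^ 5 := by
      rw [map_pow]; exact hcc4s.trans hb5
    have T2 : v (5 * x * y ^ 3) < v x ^ 5 := by
      have e1 : v (5 * x * y ^ 3) = (1/5 * v y ^ 3) * v x ^ 1 := by
        simp only [map_mul, map_pow, h5]; ring
      rw [e1]
      refine term_bound hb0 1 4 (by norm_num) (s := P5 (-1) * P5 (-(3/2))) ?_ ?_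
        (mul_nonneg (by norm_num) (pow_nonneg (v.nonneg y) 3))
      · rw [P5_neg_one]
        exact mul_le_mul_of_nonneg_left hcc3 (by norm_num)
      · rw [P5_mul' (by norm_num : (-1:ℝ) + -(3/2) = -(5/2))]
        exact lt_trans (P5_lt (by norm_num)) hb4
    have T3 : v (15 * x ^ 2 * y ^ 2) < v x ^ 5 := by
      have e1 : v (15 * x ^ 2 * y ^ 2) = (1/5 * v y ^ 2) * v x ^ 2 := by
        simp only [map_mul, map_pow, h15]; ring
      rw [e1]
      refine term_bound hb0 2 3 (by norm_num) (s := P5 (-1) * P5 (-1)) ?_ ?_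
        (mul_nonneg (by norm_num) (pow_nonneg (v.nonneg y) 2))
      · calc 1/5 * v y ^ 2 ≤ 1/5 * P5 (-1) := mul_le_mul_of_nonneg_left hcc2s.le (by norm_num)
          _ = P5 (-1) * P5 (-1) := by rw [P5_neg_one]
      · rw [P5_mul' (by norm_num : (-1:ℝ) + -1 = -2)]
        exact lt_trans (P5_lt (by norm_num)) hb3
    have T4 : v (25 * x ^ 3 * y) < v x ^ 5 := by
      have e1 : v (25 * x ^ 3 * y) = (1/25 * v y) * v x ^ 3 := by
        simp only [map_mul, map_pow, h25]; ring
      rw [e1]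
      refine term_bound hb0 3 2 (by norm_num) (s := P5 (-2)) ?_ ?_
        (mul_nonneg (by norm_num) (v.nonneg y))
      · rw [P5_neg_two]; nlinarith [v.nonneg y]
      · exact lt_trans (P5_lt (by norm_num)) hb2
    have T5 : v (25 * x ^ 4) < v x ^ 5 := by
      have e1 : v (25 * x ^ 4) = (1/25) * v x ^ 4 := by
        simp only [map_mul, map_pow, h25]
      rw [e1]
      refine term_bound hb0 4 1 (by norm_num) (s := P5 (-2)) (le_of_eq P5_neg_two.symm) ?_
        (by norm_num)
      rw [pow_one]
      exact lt_trans (P5_lt (by norm_num)) hbig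
    have T6 : v (5 * y ^ 3) < v x ^ 5 := by
      have e1 : v (5 * y ^ 3) = 1/5 * v y ^ 3 := by simp only [map_mul, map_pow, h5]
      rw [e1]
      calc 1/5 * v y ^ 3 ≤ P5 (-1) * P5 (-(3/2)) := by
            rw [P5_neg_one]; exact mul_le_mul_of_nonneg_left hcc3 (by norm_num)
        _ = P5 (-(5/2)) := P5_mul' (by norm_num)
        _ < P5 (-2) := P5_lt (by norm_num)
        _ < v x ^ 5 := hb5
    have T7 : v (5 * x * y ^ 2) < v x ^ 5 := by
      have e1 : v (5 * x * y ^ 2) = (1/5 * v y ^ 2) * v x ^ 1 := by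
        simp only [map_mul, map_pow, h5]; ring
      rw [e1]
      refine term_bound hb0 1 4 (by norm_num) (s := P5 (-1) * P5 (-1)) ?_ ?_
        (mul_nonneg (by norm_num) (pow_nonneg (v.nonneg y) 2))
      · calc 1/5 * v y ^ 2 ≤ 1/5 * P5 (-1) := mul_le_mul_of_nonneg_left hcc2s.le (by norm_num)
          _ = P5 (-1) * P5 (-1) := by rw [P5_neg_one]
      · rw [P5_mul' (by norm_num : (-1:ℝ) + -1 = -2)]
        exact lt_trans (P5_lt (by norm_num)) hb4
    have T8 : v (25 * x ^ 3) < v x ^ 5 := by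
      have e1 : v (25 * x ^ 3) = 1/25 * v x ^ 3 := by simp only [map_mul, map_pow, h25]
      rw [e1]
      refine term_bound hb0 3 2 (by norm_num) (le_of_eq P5_neg_two.symm) ?_ (by norm_num)
      exact lt_trans (P5_lt (by norm_num)) hb2
    have T9 : v (15 * y ^ 2) < v x ^ 5 := by
      have e1 : v (15 * y ^ 2) = 1/5 * v y ^ 2 := by simp only [map_mul, map_pow, h15]
      rw [e1]
      calc 1/5 * v y ^ 2 ≤ 1/5 * P5 (-1) := mul_le_mul_of_nonneg_left hcc2s.le (by norm_num)
        _ = P5 (-1) * P5 (-1) := by rw [P5_neg_one]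
        _ = P5 (-2) := P5_mul' (by norm_num)
        _ < v x ^ 5 := hb5
    have T10 : v (25 * x ^ 2) < v x ^ 5 := by
      have e1 : v (25 * x ^ 2) = 1/25 * v x ^ 2 := by simp only [map_mul, map_pow, h25]
      rw [e1]
      refine term_bound hb0 2 3 (by norm_num) (le_of_eq P5_neg_two.symm) ?_ (by norm_num)
      exact lt_trans (P5_lt (by norm_num)) hb3
    have T11 : v (25 * y) < v x ^ 5 := by
      have e1 : v (25 * y) = 1/25 * v y := by simp only [map_mul, h25]
      rw [e1]
      calc 1/25 * v y ≤ 1/25 := by nlinarith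
        _ = P5 (-2) := P5_neg_two.symm
        _ < v x ^ 5 := hb5
    have T12 : v (25 * x) < v x ^ 5 := by
      have e1 : v (25 * x) = (1/25) * v x ^ 1 := by simp only [map_mul, h25]; ring
      rw [e1]
      refine term_bound hb0 1 4 (by norm_num) (le_of_eq P5_neg_two.symm) ?_ (by norm_num)
      exact lt_trans (P5_lt (by norm_num)) hb4
    have T13 : v (25 : K) < v x ^ 5 := by rw [h25']; exact hb5
    have hcontr : v (x ^ 5) < v x ^ 5 := by
      rw [hx5]
      exact nadd_lt hna (nsub_lt hna (nadd_lt hna (nadd_lt hna (nadd_lt hna (nsub_lt hna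
        (nadd_lt hna (nadd_lt hna (nadd_lt hna (nadd_lt hna (nadd_lt hna (nadd_lt hna
          T1 T2) T3) T4) T5) T6) T7) T8) T9) T10) T11) T12) T13
    rw [map_pow] at hcontr
    exact absurd hcontr (lt_irrefl _)
  -- consequences of `v x ≤ 5^(-2/5)`
  have hb0' : (0:ℝ) ≤ v x := v.nonneg x
  have hb1 : v x < 1 := lt_of_le_of_lt hble (P5_lt_one (by norm_num))
  have hb2le : v x ^ 2 ≤ P5 (-(4/5)) := by
    have h := pow_le_pow_left₀ hb0' hble 2
    rwa [P5_pow' 2 (by norm_num : (-(2/5):ℝ) * 2 = -(4/5))] at h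
  have hb3le : v x ^ 3 ≤ P5 (-(6/5)) := by
    have h := pow_le_pow_left₀ hb0' hble 3
    rwa [P5_pow' 3 (by norm_num : (-(2/5):ℝ) * 3 = -(6/5))] at h
  have hb4le : v x ^ 4 ≤ P5 (-(8/5)) := by
    have h := pow_le_pow_left₀ hb0' hble 4
    rwa [P5_pow' 4 (by norm_num : (-(2/5):ℝ) * 4 = -(8/5))] at h
  -- the dominant-term computation : `v (x^5 + 25x - 25) = (1/5) (v y)^2`
  have hH : x ^ 5 + 25 * x - 25 = 15 * y ^ 2 +
      (y ^ 4 + 5 * x * y ^ 3 + 15 * x ^ 2 * y ^ 2 + 25 * x ^ 3 * y + 5 * y ^ 3 + 5 * x * y ^ 2 +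
        25 * y + 25 * x ^ 4 - 25 * x ^ 3 + 25 * x ^ 2) := by
    linear_combination -hf'
  have hT_lb : P5 (-(5/2)) < P5 (-1) * v y ^ 2 := by
    calc P5 (-(5/2)) = P5 (-1) * P5 (-(3/2)) := (P5_mul' (by norm_num)).symm
      _ < P5 (-1) * v y ^ 2 := by
          exact mul_lt_mul_of_pos_left hcc2lb (P5_pos _)
  have hT0 : (0:ℝ) < P5 (-1) * v y ^ 2 := mul_pos (P5_pos _) (pow_pos hcpos 2)
  have hPcc : P5 (-(7/4)) < P5 (-1) * v y := by
    calc P5 (-(7/4)) = P5 (-1) * P5 (-(3/4)) := (P5_mul' (by norm_num)).symm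
      _ < P5 (-1) * v y := mul_lt_mul_of_pos_left hc1 (P5_pos _)
  have S1 : v (y ^ 4) < P5 (-1) * v y ^ 2 := by
    have e1 : v (y ^ 4) = v y ^ 2 * v y ^ 2 := by rw [map_pow]; ring
    rw [e1]
    exact mul_lt_mul_of_pos_right hcc2s (pow_pos hcpos 2)
  have S2 : v (5 * x * y ^ 3) < P5 (-1) * v y ^ 2 := by
    have e1 : v (5 * x * y ^ 3) = (v x * v y) * (P5 (-1) * v y ^ 2) := by
      simp only [map_mul, map_pow, h5, P5_neg_one]; ring
    rw [e1]
    have hbc : v x * v y < 1 := by nlinarith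
    calc (v x * v y) * (P5 (-1) * v y ^ 2) < 1 * (P5 (-1) * v y ^ 2) :=
          mul_lt_mul_of_pos_right hbc hT0
      _ = P5 (-1) * v y ^ 2 := one_mul _
  have S3 : v (15 * x ^ 2 * y ^ 2) < P5 (-1) * v y ^ 2 := by
    have e1 : v (15 * x ^ 2 * y ^ 2) = v x ^ 2 * (P5 (-1) * v y ^ 2) := by
      simp only [map_mul, map_pow, h15, P5_neg_one]; ring
    rw [e1]
    have hbb : v x ^ 2 < 1 := by nlinarith
    calc v x ^ 2 * (P5 (-1) * v y ^ 2) < 1 * (P5 (-1) * v y ^ 2) :=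
          mul_lt_mul_of_pos_right hbb hT0
      _ = P5 (-1) * v y ^ 2 := one_mul _
  have S4 : v (25 * x ^ 3 * y) < P5 (-1) * v y ^ 2 := by
    have e1 : v (25 * x ^ 3 * y) = (P5 (-2) * v x ^ 3) * v y := by
      simp only [map_mul, map_pow, h25, P5_neg_two]
    rw [e1]
    calc (P5 (-2) * v x ^ 3) * v y ≤ (P5 (-2) * P5 (-(6/5))) * v y := by
          refine mul_le_mul_of_nonneg_right ?_ hc0
          exact mul_le_mul_of_nonneg_left hb3le (P5_nonneg _)
      _ = P5 (-(16/5)) * v y := by rw [P5_mul' (by norm_num : (-2:ℝ) + -(6/5) = -(16/5))]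
      _ < (P5 (-1) * v y) * v y := by
          refine mul_lt_mul_of_pos_right ?_ hcpos
          exact lt_trans (P5_lt (by norm_num)) hPcc
      _ = P5 (-1) * v y ^ 2 := by ring
  have S5 : v (5 * y ^ 3) < P5 (-1) * v y ^ 2 := by
    have e1 : v (5 * y ^ 3) = v y * (P5 (-1) * v y ^ 2) := by
      simp only [map_mul, map_pow, h5, P5_neg_one]; ring
    rw [e1]
    calc v y * (P5 (-1) * v y ^ 2) < 1 * (P5 (-1) * v y ^ 2) :=
          mul_lt_mul_of_pos_right hcc1 hT0
      _ = P5 (-1) * v y ^ 2 := one_mul _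
  have S6 : v (5 * x * y ^ 2) < P5 (-1) * v y ^ 2 := by
    have e1 : v (5 * x * y ^ 2) = v x * (P5 (-1) * v y ^ 2) := by
      simp only [map_mul, map_pow, h5, P5_neg_one]; ring
    rw [e1]
    calc v x * (P5 (-1) * v y ^ 2) < 1 * (P5 (-1) * v y ^ 2) :=
          mul_lt_mul_of_pos_right hb1 hT0
      _ = P5 (-1) * v y ^ 2 := one_mul _
  have S7 : v (25 * y) < P5 (-1) * v y ^ 2 := by
    have e1 : v (25 * y) = P5 (-2) * v y := by simp only [map_mul, h25, P5_neg_two]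
    rw [e1]
    calc P5 (-2) * v y < (P5 (-1) * v y) * v y := by
          refine mul_lt_mul_of_pos_right ?_ hcpos
          exact lt_trans (P5_lt (by norm_num)) hPcc
      _ = P5 (-1) * v y ^ 2 := by ring
  have S8 : v (25 * x ^ 4) < P5 (-1) * v y ^ 2 := by
    have e1 : v (25 * x ^ 4) = P5 (-2) * v x ^ 4 := by
      simp only [map_mul, map_pow, h25, P5_neg_two]
    rw [e1]
    calc P5 (-2) * v x ^ 4 ≤ P5 (-2) * P5 (-(8/5)) :=
          mul_le_mul_of_nonneg_left hb4le (P5_nonneg _)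
      _ = P5 (-(18/5)) := P5_mul' (by norm_num)
      _ < P5 (-(5/2)) := P5_lt (by norm_num)
      _ < P5 (-1) * v y ^ 2 := hT_lb
  have S9 : v (25 * x ^ 3) < P5 (-1) * v y ^ 2 := by
    have e1 : v (25 * x ^ 3) = P5 (-2) * v x ^ 3 := by
      simp only [map_mul, map_pow, h25, P5_neg_two]
    rw [e1]
    calc P5 (-2) * v x ^ 3 ≤ P5 (-2) * P5 (-(6/5)) :=
          mul_le_mul_of_nonneg_left hb3le (P5_nonneg _)
      _ = P5 (-(16/5)) := P5_mul' (by norm_num)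
      _ < P5 (-(5/2)) := P5_lt (by norm_num)
      _ < P5 (-1) * v y ^ 2 := hT_lb
  have S10 : v (25 * x ^ 2) < P5 (-1) * v y ^ 2 := by
    have e1 : v (25 * x ^ 2) = P5 (-2) * v x ^ 2 := by
      simp only [map_mul, map_pow, h25, P5_neg_two]
    rw [e1]
    calc P5 (-2) * v x ^ 2 ≤ P5 (-2) * P5 (-(4/5)) :=
          mul_le_mul_of_nonneg_left hb2le (P5_nonneg _)
      _ = P5 (-(14/5)) := P5_mul' (by norm_num)
      _ < P5 (-(5/2)) := P5_lt (by norm_num)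
      _ < P5 (-1) * v y ^ 2 := hT_lb
  have hv15y2 : v (15 * y ^ 2) = P5 (-1) * v y ^ 2 := by
    simp only [map_mul, map_pow, h15, P5_neg_one]
  have hvH : v (x ^ 5 + 25 * x - 25) = P5 (-1) * v y ^ 2 := by
    rw [hH, ← hv15y2]
    refine nadd_eq hna ?_
    rw [hv15y2]
    exact nadd_lt hna (nsub_lt hna (nadd_lt hna (nadd_lt hna (nadd_lt hna (nadd_lt hna
      (nadd_lt hna (nadd_lt hna (nadd_lt hna S1 S2) S3) S4) S5) S6) S7) S8) S9) S10
  -- factorization through `r`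
  have hq : x ^ 5 + 25 * x - 25 = (x - r) * ((x - r) ^ 4 +
      (5 * r * (x - r) ^ 3 + 10 * r ^ 2 * (x - r) ^ 2 + 10 * r ^ 3 * (x - r) +
        (5 * r ^ 4 + 25))) := by
    linear_combination hr
  have hele : v (x - r) ≤ P5 (-(2/5)) := by
    refine nsub_le hna hble ?_
    rw [hRval]
  have he0 : (0:ℝ) ≤ v (x - r) := v.nonneg _
  -- the middle terms of `q` are `≤ 5^(-13/5)`
  have hQB : v (5 * r * (x - r) ^ 3) ≤ P5 (-(13/5)) := by
    have e1 : v (5 * r * (x - r) ^ 3) = (P5 (-1) * P5 (-(2/5))) * v (x - r) ^ 3 := by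
      simp only [map_mul, map_pow, h5, hRval, P5_neg_one]
    rw [e1, P5_mul' (by norm_num : (-1:ℝ) + -(2/5) = -(7/5))]
    have h3 : v (x - r) ^ 3 ≤ P5 (-(6/5)) := by
      have h := pow_le_pow_left₀ he0 hele 3
      rwa [P5_pow' 3 (by norm_num : (-(2/5):ℝ) * 3 = -(6/5))] at h
    calc P5 (-(7/5)) * v (x - r) ^ 3 ≤ P5 (-(7/5)) * P5 (-(6/5)) :=
          mul_le_mul_of_nonneg_left h3 (P5_nonneg _)
      _ = P5 (-(13/5)) := P5_mul' (by norm_num)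
  have hQC : v (10 * r ^ 2 * (x - r) ^ 2) ≤ P5 (-(13/5)) := by
    have e1 : v (10 * r ^ 2 * (x - r) ^ 2) = (P5 (-1) * P5 (-(2/5)) ^ 2) * v (x - r) ^ 2 := by
      simp only [map_mul, map_pow, h10, hRval, P5_neg_one]
    rw [e1, P5_pow' 2 (by norm_num : (-(2/5):ℝ) * 2 = -(4/5)),
      P5_mul' (by norm_num : (-1:ℝ) + -(4/5) = -(9/5))]
    have h2 : v (x - r) ^ 2 ≤ P5 (-(4/5)) := by
      have h := pow_le_pow_left₀ he0 hele 2
      rwa [P5_pow' 2 (by norm_num : (-(2/5):ℝ) * 2 = -(4/5))] at h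
    calc P5 (-(9/5)) * v (x - r) ^ 2 ≤ P5 (-(9/5)) * P5 (-(4/5)) :=
          mul_le_mul_of_nonneg_left h2 (P5_nonneg _)
      _ = P5 (-(13/5)) := P5_mul' (by norm_num)
  have hQD : v (10 * r ^ 3 * (x - r)) ≤ P5 (-(13/5)) := by
    have e1 : v (10 * r ^ 3 * (x - r)) = (P5 (-1) * P5 (-(2/5)) ^ 3) * v (x - r) := by
      simp only [map_mul, map_pow, h10, hRval, P5_neg_one]
    rw [e1, P5_pow' 3 (by norm_num : (-(2/5):ℝ) * 3 = -(6/5)),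
      P5_mul' (by norm_num : (-1:ℝ) + -(6/5) = -(11/5))]
    calc P5 (-(11/5)) * v (x - r) ≤ P5 (-(11/5)) * P5 (-(2/5)) :=
          mul_le_mul_of_nonneg_left hele (P5_nonneg _)
      _ = P5 (-(13/5)) := P5_mul' (by norm_num)
  have hQE : v (5 * r ^ 4) ≤ P5 (-(13/5)) := by
    have e1 : v (5 * r ^ 4) = P5 (-1) * P5 (-(2/5)) ^ 4 := by
      simp only [map_mul, map_pow, h5, hRval, P5_neg_one]
    rw [e1, P5_pow' 4 (by norm_num : (-(2/5):ℝ) * 4 = -(8/5)),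
      P5_mul' (by norm_num : (-1:ℝ) + -(8/5) = -(13/5))]
  -- `v (x - r) > 5^(-1/2)`
  have hvfac : v (x - r) * v ((x - r) ^ 4 +
      (5 * r * (x - r) ^ 3 + 10 * r ^ 2 * (x - r) ^ 2 + 10 * r ^ 3 * (x - r) +
        (5 * r ^ 4 + 25))) = P5 (-1) * v y ^ 2 := by
    rw [← map_mul, ← hq, hvH]
  have he : P5 (-(1/2)) < v (x - r) := by
    by_contra hle
    push_neg at hle
    have h4 : v ((x - r) ^ 4) ≤ P5 (-2) := by
      rw [map_pow]
      have h := pow_le_pow_left₀ he0 hle 4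
      rwa [P5_pow' 4 (by norm_num : (-(1/2):ℝ) * 4 = -2)] at h
    have h132 : P5 (-(13/5)) ≤ P5 (-2) := (P5_lt (by norm_num)).le
    have hQle : v ((x - r) ^ 4 +
        (5 * r * (x - r) ^ 3 + 10 * r ^ 2 * (x - r) ^ 2 + 10 * r ^ 3 * (x - r) +
          (5 * r ^ 4 + 25))) ≤ P5 (-2) := by
      refine nadd_le hna h4 (nadd_le hna (nadd_le hna (nadd_le hna (hQB.trans h132)
        (hQC.trans h132)) (hQD.trans h132)) (nadd_le hna (hQE.trans h132) (le_of_eq h25')))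
    have hfin : P5 (-1) * v y ^ 2 ≤ P5 (-(5/2)) := by
      rw [← hvfac, ← P5_mul' (by norm_num : (-(1/2):ℝ) + -2 = -(5/2))]
      exact mul_le_mul hle hQle (v.nonneg _) (P5_nonneg _)
    linarith [hT_lb]
  -- hence the leading term of `q` dominates
  have he4 : P5 (-2) < v (x - r) ^ 4 := by
    have h := pow_lt_pow_left₀ he (P5_nonneg _) (four_ne_zero)
    rwa [P5_pow' 4 (by norm_num : (-(1/2):ℝ) * 4 = -2)] at h
  have h132' : P5 (-(13/5)) < v (x - r) ^ 4 := lt_trans (P5_lt (by norm_num)) he4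
  have hvQ : v ((x - r) ^ 4 +
      (5 * r * (x - r) ^ 3 + 10 * r ^ 2 * (x - r) ^ 2 + 10 * r ^ 3 * (x - r) +
        (5 * r ^ 4 + 25))) = v (x - r) ^ 4 := by
    rw [← map_pow v (x - r) 4]
    refine nadd_eq hna ?_
    rw [map_pow]
    exact nadd_lt hna (nadd_lt hna (nadd_lt hna (lt_of_le_of_lt hQB h132')
      (lt_of_le_of_lt hQC h132')) (lt_of_le_of_lt hQD h132'))
      (nadd_lt hna (lt_of_le_of_lt hQE h132') (h25' ▸ he4))
  have he5 : v (x - r) ^ 5 = P5 (-1) * v y ^ 2 := by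
    rw [← hvfac, hvQ]; ring
  refine ⟨by rw [he5, P5_neg_one]; ring, he, ?_⟩
  -- upper bound
  have hlt : v (x - r) ^ 5 < P5 (-(2/5)) ^ 5 := by
    rw [P5_pow' 5 (by norm_num : (-(2/5):ℝ) * 5 = -2), he5]
    calc P5 (-1) * v y ^ 2 < P5 (-1) * P5 (-1) := mul_lt_mul_of_pos_left hcc2s (P5_pos _)
      _ = P5 (-2) := P5_mul' (by norm_num)
  exact lt_of_pow_lt_pow_left₀ 5 (P5_nonneg _) hlt
end
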